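/- arXiv:2011.13501 — 5 statements merged into one kernel-verified Lean document; each statement's English description precedes it below -/
import Mathlib

section
/- Let (Ω, μ) be a finite measure space, T > 0, 1 < p < 5, and set θ = (5 − p)/(4p). Then there exists a constant C > 0, depending only on T, μ(Ω) and p, such that for all measurable u, w : Ω × (0,T) → ℝ with u ∈ L⁵(0,T; L^{10}(Ω)), w ∈ L²(0,T; L²(Ω)) ∩ L⁵(0,T; L^{10}(Ω)), one has ∫₀^T ‖ |u(·,t)|^{p−1} w(·,t) ‖_{L²(Ω)} dt ≤ C ‖u‖_{L⁵(0,T;L^{10}(Ω))}^{p−1} ‖w‖_{L²(0,T;L²(Ω))}^{θ} ‖w‖_{L⁵(0,T;L^{10}(Ω))}^{1−θ}. -/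
open MeasureTheory Set
open scoped ENNReal

private lemma holder3 {α : Type*} [MeasurableSpace α] (μ : Measure α)
    {f g h : α → ℝ≥0∞} (hf : AEMeasurable f μ) (hg : AEMeasurable g μ)
    (hh : AEMeasurable h μ) {p q r : ℝ} (hp : 0 ≤ p) (hq : 0 ≤ q) (hr : 0 ≤ r)
    (hsum : p + q + r ≤ 1) :
    ∫⁻ a, f a ^ p * g a ^ q * h a ^ r ∂μ ≤
      (μ univ) ^ (1 - (p + q + r)) * (∫⁻ a, f a ∂μ) ^ p * (∫⁻ a, g a ∂μ) ^ q *
        (∫⁻ a, h a ∂μ) ^ r := by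
  classical
  set F : Fin 4 → α → ℝ≥0∞ := ![fun _ => 1, f, g, h]
  set P : Fin 4 → ℝ := ![1 - (p + q + r), p, q, r]
  have key := ENNReal.lintegral_prod_norm_pow_le (μ := μ) Finset.univ
    (f := F) (fun i _ => by
      fin_cases i <;> simp [F, hf, hg, hh])
    (p := P) (by simp [P, Fin.sum_univ_four]; ring) (fun i _ => by
      fin_cases i <;> simp [P, hp, hq, hr] <;> linarith)
  calc ∫⁻ a, f a ^ p * g a ^ q * h a ^ r ∂μ
      = ∫⁻ a, ∏ i, F i a ^ P i ∂μ := by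
        congr 1; funext a
        simp only [F, P, Fin.prod_univ_four, Matrix.cons_val_zero, Matrix.cons_val_one,
          Matrix.head_cons, Matrix.cons_val_two, Matrix.tail_cons, Matrix.cons_val_three,
          ENNReal.one_rpow, one_mul]
    _ ≤ ∏ i, (∫⁻ a, F i a ∂μ) ^ P i := key
    _ = (μ univ) ^ (1 - (p + q + r)) * (∫⁻ a, f a ∂μ) ^ p * (∫⁻ a, g a ∂μ) ^ q *
        (∫⁻ a, h a ∂μ) ^ r := by
        simp [F, P, Fin.prod_univ_four, lintegral_const, one_mul]

private lemma rpow_swap (x : ℝ≥0∞) (s t : ℝ) : (x ^ s) ^ t = (x ^ t) ^ s := by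
  rw [← ENNReal.rpow_mul, ← ENNReal.rpow_mul, mul_comm]

/-- Let `(Ω, μ)` be a finite measure space, `T > 0`, `1 < p < 5`, and
`θ = (5 − p)/(4p)`.  Then there is `C > 0`, depending only on `T`, `μ(Ω)` and `p`, such
that for all measurable `u ∈ L⁵(0,T;L¹⁰(Ω))` and
`w ∈ L²(0,T;L²(Ω)) ∩ L⁵(0,T;L¹⁰(Ω))` one has
`∫₀^T ‖ |u(·,t)|^{p−1} w(·,t) ‖_{L²(Ω)} dt ≤
  C ‖u‖_{L⁵L¹⁰}^{p−1} ‖w‖_{L²L²}^θ ‖w‖_{L⁵L¹⁰}^{1−θ}`. -/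
theorem stmt_7 {Ω : Type*} [MeasurableSpace Ω] (μ : Measure Ω) [IsFiniteMeasure μ]
    (T p : ℝ) (hT : 0 < T) (hp1 : 1 < p) (hp5 : p < 5) :
    ∃ C : ℝ, 0 < C ∧ ∀ u w : ℝ → Ω → ℝ,
      Measurable (Function.uncurry u) → Measurable (Function.uncurry w) →
      (∀ t ∈ Ioc (0:ℝ) T, Integrable (fun x => |u t x| ^ (10:ℝ)) μ) →
      (∀ t ∈ Ioc (0:ℝ) T, Integrable (fun x => |w t x| ^ (2:ℝ)) μ) →
      (∀ t ∈ Ioc (0:ℝ) T, Integrable (fun x => |w t x| ^ (10:ℝ)) μ) →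
      IntegrableOn
        (fun t => ((∫ x, |u t x| ^ (10:ℝ) ∂μ) ^ ((1:ℝ)/10)) ^ (5:ℝ)) (Ioc (0:ℝ) T) →
      IntegrableOn
        (fun t => ((∫ x, |w t x| ^ (2:ℝ) ∂μ) ^ ((1:ℝ)/2)) ^ (2:ℝ)) (Ioc (0:ℝ) T) →
      IntegrableOn
        (fun t => ((∫ x, |w t x| ^ (10:ℝ) ∂μ) ^ ((1:ℝ)/10)) ^ (5:ℝ)) (Ioc (0:ℝ) T) →
      (∫ t in Ioc (0:ℝ) T, (∫ x, (|u t x| ^ (p - 1) * |w t x|) ^ (2:ℝ) ∂μ) ^ ((1:ℝ)/2))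
        ≤ C *
          ((∫ t in Ioc (0:ℝ) T,
              ((∫ x, |u t x| ^ (10:ℝ) ∂μ) ^ ((1:ℝ)/10)) ^ (5:ℝ)) ^ ((1:ℝ)/5)) ^ (p - 1) *
          ((∫ t in Ioc (0:ℝ) T,
              ((∫ x, |w t x| ^ (2:ℝ) ∂μ) ^ ((1:ℝ)/2)) ^ (2:ℝ)) ^ ((1:ℝ)/2))
            ^ ((5 - p) / (4 * p)) *
          ((∫ t in Ioc (0:ℝ) T,
              ((∫ x, |w t x| ^ (10:ℝ) ∂μ) ^ ((1:ℝ)/10)) ^ (5:ℝ)) ^ ((1:ℝ)/5))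
            ^ (1 - (5 - p) / (4 * p)) := by
  have hp0 : 0 < p := by linarith
  set θ : ℝ := (5 - p) / (4 * p) with hθdef
  have hθp : θ * (4 * p) = 5 - p := by
    rw [hθdef]; field_simp
  have hθ0 : 0 < θ := div_pos (by linarith) (by linarith)
  have hθ1 : θ ≤ 1 := by nlinarith
  set q1 : ℝ := (p - 1) / 5 with hq1def
  set r1 : ℝ := (1 - θ) / 5 with hr1def
  have hq10 : 0 ≤ q1 := by rw [hq1def]; linarith
  have hr10 : 0 ≤ r1 := by rw [hr1def]; linarith
  have hs1 : q1 + θ + r1 ≤ 1 := by rw [hq1def, hr1def]; nlinarith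
  set σ : ℝ := q1 + θ/2 + r1 with hσdef
  have hσ1 : σ ≤ 1 := by rw [hσdef, hq1def, hr1def]; nlinarith
  set M : ℝ := (μ univ).toReal with hMdef
  have hM0 : 0 ≤ M := ENNReal.toReal_nonneg
  refine ⟨((1 + M) ^ (1 - (q1 + θ + r1))) ^ ((1:ℝ)/2) * T ^ (1 - σ), by positivity, ?_⟩
  intro u w hu hw hu10 hw2 hw10 hU hW2 hW10
  have hum : ∀ t, Measurable (u t) := fun t => hu.of_uncurry_left
  have hwm : ∀ t, Measurable (w t) := fun t => hw.of_uncurry_left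
  -- ENNReal-valued quantities
  set FA : ℝ → ℝ≥0∞ := fun t => ∫⁻ x, ENNReal.ofReal (|u t x| ^ (10:ℝ)) ∂μ with hFAdef
  set FB : ℝ → ℝ≥0∞ := fun t => ∫⁻ x, ENNReal.ofReal (|w t x| ^ (2:ℝ)) ∂μ with hFBdef
  set FD : ℝ → ℝ≥0∞ := fun t => ∫⁻ x, ENNReal.ofReal (|w t x| ^ (10:ℝ)) ∂μ with hFDdef
  set FL : ℝ → ℝ≥0∞ := fun t =>
    (∫⁻ x, ENNReal.ofReal ((|u t x| ^ (p - 1) * |w t x|) ^ (2:ℝ)) ∂μ) ^ ((1:ℝ)/2) with hFLdef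
  have hFAm : Measurable FA :=
    Measurable.lintegral_prod_right (f := fun t x => ENNReal.ofReal (|u t x| ^ (10:ℝ)))
      ((hu.abs.pow measurable_const).ennreal_ofReal)
  have hFBm : Measurable FB :=
    Measurable.lintegral_prod_right (f := fun t x => ENNReal.ofReal (|w t x| ^ (2:ℝ)))
      ((hw.abs.pow measurable_const).ennreal_ofReal)
  have hFDm : Measurable FD :=
    Measurable.lintegral_prod_right (f := fun t x => ENNReal.ofReal (|w t x| ^ (10:ℝ)))
      ((hw.abs.pow measurable_const).ennreal_ofReal)
  have hFLm : Measurable FL := by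
    apply Measurable.pow _ measurable_const
    exact Measurable.lintegral_prod_right
      (f := fun t x => ENNReal.ofReal ((|u t x| ^ (p - 1) * |w t x|) ^ (2:ℝ)))
      ((((hu.abs.pow measurable_const).mul hw.abs).pow measurable_const).ennreal_ofReal)
  set c1 : ℝ≥0∞ := ((μ univ) ^ (1 - (q1 + θ + r1))) ^ ((1:ℝ)/2) with hc1def
  have hc1ne : c1 ≠ ⊤ := by
    rw [hc1def]
    exact (ENNReal.rpow_lt_top_of_nonneg (by norm_num)
      (ENNReal.rpow_lt_top_of_nonneg (by linarith) (measure_ne_top μ _)).ne).ne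
  -- Spatial Hölder inequality, for every t
  have spatial : ∀ t, FL t ≤
      c1 * ((FA t ^ ((1:ℝ)/2)) ^ q1 * FB t ^ (θ/2) * (FD t ^ ((1:ℝ)/2)) ^ r1) := by
    intro t
    have hpt : ∀ x : Ω, ENNReal.ofReal ((|u t x| ^ (p - 1) * |w t x|) ^ (2:ℝ)) =
        (ENNReal.ofReal (|u t x| ^ (10:ℝ))) ^ q1 * (ENNReal.ofReal (|w t x| ^ (2:ℝ))) ^ θ *
        (ENNReal.ofReal (|w t x| ^ (10:ℝ))) ^ r1 := by
      intro x
      rw [ENNReal.ofReal_rpow_of_nonneg (by positivity) hq10,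
        ENNReal.ofReal_rpow_of_nonneg (by positivity) hθ0.le,
        ENNReal.ofReal_rpow_of_nonneg (by positivity) hr10,
        ← ENNReal.ofReal_mul (by positivity), ← ENNReal.ofReal_mul (by positivity)]
      congr 1
      have e1 : (10:ℝ) * q1 = (p - 1) * 2 := by rw [hq1def]; ring
      have e2 : (2:ℝ) * θ + 10 * r1 = 2 := by rw [hr1def]; ring
      calc (|u t x| ^ (p - 1) * |w t x|) ^ (2:ℝ)
          = |u t x| ^ ((p-1) * 2) * |w t x| ^ ((2:ℝ) * θ + 10 * r1) := by
            rw [Real.mul_rpow (by positivity) (abs_nonneg _),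
              ← Real.rpow_mul (abs_nonneg _), e2]
        _ = (|u t x| ^ (10:ℝ)) ^ q1 * ((|w t x| ^ (2:ℝ)) ^ θ * (|w t x| ^ (10:ℝ)) ^ r1) := by
            rw [← Real.rpow_mul (abs_nonneg _), ← Real.rpow_mul (abs_nonneg _),
              ← Real.rpow_mul (abs_nonneg _), e1,
              ← Real.rpow_add_of_nonneg (abs_nonneg _) (by linarith) (by nlinarith)]
        _ = _ := by ring
    have key := holder3 μ
      (f := fun x => ENNReal.ofReal (|u t x| ^ (10:ℝ)))
      (g := fun x => ENNReal.ofReal (|w t x| ^ (2:ℝ)))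
      (h := fun x => ENNReal.ofReal (|w t x| ^ (10:ℝ)))
      (((hum t).abs.pow measurable_const).ennreal_ofReal.aemeasurable)
      (((hwm t).abs.pow measurable_const).ennreal_ofReal.aemeasurable)
      (((hwm t).abs.pow measurable_const).ennreal_ofReal.aemeasurable)
      hq10 hθ0.le hr10 hs1
    calc FL t
        = (∫⁻ x, (ENNReal.ofReal (|u t x| ^ (10:ℝ))) ^ q1 *
            (ENNReal.ofReal (|w t x| ^ (2:ℝ))) ^ θ *
            (ENNReal.ofReal (|w t x| ^ (10:ℝ))) ^ r1 ∂μ) ^ ((1:ℝ)/2) := by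
          simp only [hFLdef]; congr 1; exact lintegral_congr hpt
      _ ≤ ((μ univ) ^ (1 - (q1 + θ + r1)) * FA t ^ q1 * FB t ^ θ * FD t ^ r1) ^ ((1:ℝ)/2) :=
          ENNReal.rpow_le_rpow key (by norm_num)
      _ = c1 * ((FA t ^ ((1:ℝ)/2)) ^ q1 * FB t ^ (θ/2) * (FD t ^ ((1:ℝ)/2)) ^ r1) := by
          rw [ENNReal.mul_rpow_of_nonneg _ _ (by norm_num : (0:ℝ) ≤ 1/2),
            ENNReal.mul_rpow_of_nonneg _ _ (by norm_num : (0:ℝ) ≤ 1/2),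
            ENNReal.mul_rpow_of_nonneg _ _ (by norm_num : (0:ℝ) ≤ 1/2),
            rpow_swap (FA t), rpow_swap (FD t), hc1def]
          have : (FB t ^ θ) ^ ((1:ℝ)/2) = FB t ^ (θ/2) := by
            rw [← ENNReal.rpow_mul]; ring_nf
          rw [this]; ring
  -- pointwise (in t) identifications of the real integrands with ENNReal quantities
  have hAt : ∀ t ∈ Ioc (0:ℝ) T,
      ENNReal.ofReal (((∫ x, |u t x| ^ (10:ℝ) ∂μ) ^ ((1:ℝ)/10)) ^ (5:ℝ)) = FA t ^ ((1:ℝ)/2) := by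
    intro t ht
    have hnn : 0 ≤ᵐ[μ] fun x => |u t x| ^ (10:ℝ) :=
      Filter.Eventually.of_forall fun x => by positivity
    have hint := hu10 t ht
    have hfin : FA t ≠ ⊤ :=
      ((hasFiniteIntegral_iff_ofReal hnn).mp hint.hasFiniteIntegral).ne
    have heq : ∫ x, |u t x| ^ (10:ℝ) ∂μ = (FA t).toReal :=
      integral_eq_lintegral_of_nonneg_ae hnn hint.aestronglyMeasurable
    have e0 : ((1:ℝ)/10) * 5 = 1/2 := by norm_num
    rw [heq, ← Real.rpow_mul ENNReal.toReal_nonneg, e0, ENNReal.toReal_rpow,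
      ENNReal.ofReal_toReal (ENNReal.rpow_lt_top_of_nonneg (by norm_num) hfin).ne]
  have hBt : ∀ t ∈ Ioc (0:ℝ) T,
      ENNReal.ofReal (((∫ x, |w t x| ^ (2:ℝ) ∂μ) ^ ((1:ℝ)/2)) ^ (2:ℝ)) = FB t := by
    intro t ht
    have hnn : 0 ≤ᵐ[μ] fun x => |w t x| ^ (2:ℝ) :=
      Filter.Eventually.of_forall fun x => by positivity
    have hint := hw2 t ht
    have hfin : FB t ≠ ⊤ :=
      ((hasFiniteIntegral_iff_ofReal hnn).mp hint.hasFiniteIntegral).ne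
    have heq : ∫ x, |w t x| ^ (2:ℝ) ∂μ = (FB t).toReal :=
      integral_eq_lintegral_of_nonneg_ae hnn hint.aestronglyMeasurable
    have e0 : ((1:ℝ)/2) * 2 = 1 := by norm_num
    rw [heq, ← Real.rpow_mul ENNReal.toReal_nonneg, e0, Real.rpow_one,
      ENNReal.ofReal_toReal hfin]
  have hDt : ∀ t ∈ Ioc (0:ℝ) T,
      ENNReal.ofReal (((∫ x, |w t x| ^ (10:ℝ) ∂μ) ^ ((1:ℝ)/10)) ^ (5:ℝ)) = FD t ^ ((1:ℝ)/2) := by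
    intro t ht
    have hnn : 0 ≤ᵐ[μ] fun x => |w t x| ^ (10:ℝ) :=
      Filter.Eventually.of_forall fun x => by positivity
    have hint := hw10 t ht
    have hfin : FD t ≠ ⊤ :=
      ((hasFiniteIntegral_iff_ofReal hnn).mp hint.hasFiniteIntegral).ne
    have heq : ∫ x, |w t x| ^ (10:ℝ) ∂μ = (FD t).toReal :=
      integral_eq_lintegral_of_nonneg_ae hnn hint.aestronglyMeasurable
    have e0 : ((1:ℝ)/10) * 5 = 1/2 := by norm_num
    rw [heq, ← Real.rpow_mul ENNReal.toReal_nonneg, e0, ENNReal.toReal_rpow,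
      ENNReal.ofReal_toReal (ENNReal.rpow_lt_top_of_nonneg (by norm_num) hfin).ne]
  -- the three time-integral quantities
  set X : ℝ≥0∞ := ∫⁻ t in Ioc (0:ℝ) T, FA t ^ ((1:ℝ)/2) with hXdef
  set Y : ℝ≥0∞ := ∫⁻ t in Ioc (0:ℝ) T, FB t with hYdef
  set Z : ℝ≥0∞ := ∫⁻ t in Ioc (0:ℝ) T, FD t ^ ((1:ℝ)/2) with hZdef
  have hnnU : 0 ≤ᵐ[volume.restrict (Ioc (0:ℝ) T)]
      fun t => ((∫ x, |u t x| ^ (10:ℝ) ∂μ) ^ ((1:ℝ)/10)) ^ (5:ℝ) :=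
    Filter.Eventually.of_forall fun t =>
      Real.rpow_nonneg (Real.rpow_nonneg (integral_nonneg fun x => by positivity) _) _
  have hnnW2 : 0 ≤ᵐ[volume.restrict (Ioc (0:ℝ) T)]
      fun t => ((∫ x, |w t x| ^ (2:ℝ) ∂μ) ^ ((1:ℝ)/2)) ^ (2:ℝ) :=
    Filter.Eventually.of_forall fun t =>
      Real.rpow_nonneg (Real.rpow_nonneg (integral_nonneg fun x => by positivity) _) _
  have hnnW10 : 0 ≤ᵐ[volume.restrict (Ioc (0:ℝ) T)]
      fun t => ((∫ x, |w t x| ^ (10:ℝ) ∂μ) ^ ((1:ℝ)/10)) ^ (5:ℝ) :=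
    Filter.Eventually.of_forall fun t =>
      Real.rpow_nonneg (Real.rpow_nonneg (integral_nonneg fun x => by positivity) _) _
  have hXeq : X = ∫⁻ t in Ioc (0:ℝ) T,
      ENNReal.ofReal (((∫ x, |u t x| ^ (10:ℝ) ∂μ) ^ ((1:ℝ)/10)) ^ (5:ℝ)) :=
    (lintegral_congr_ae ((ae_restrict_mem measurableSet_Ioc).mono fun t ht => hAt t ht)).symm
  have hYeq : Y = ∫⁻ t in Ioc (0:ℝ) T,
      ENNReal.ofReal (((∫ x, |w t x| ^ (2:ℝ) ∂μ) ^ ((1:ℝ)/2)) ^ (2:ℝ)) :=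
    (lintegral_congr_ae ((ae_restrict_mem measurableSet_Ioc).mono fun t ht => hBt t ht)).symm
  have hZeq : Z = ∫⁻ t in Ioc (0:ℝ) T,
      ENNReal.ofReal (((∫ x, |w t x| ^ (10:ℝ) ∂μ) ^ ((1:ℝ)/10)) ^ (5:ℝ)) :=
    (lintegral_congr_ae ((ae_restrict_mem measurableSet_Ioc).mono fun t ht => hDt t ht)).symm
  have hXfin : X ≠ ⊤ := by
    rw [hXeq]; exact ((hasFiniteIntegral_iff_ofReal hnnU).mp hU.hasFiniteIntegral).ne
  have hYfin : Y ≠ ⊤ := by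
    rw [hYeq]; exact ((hasFiniteIntegral_iff_ofReal hnnW2).mp hW2.hasFiniteIntegral).ne
  have hZfin : Z ≠ ⊤ := by
    rw [hZeq]; exact ((hasFiniteIntegral_iff_ofReal hnnW10).mp hW10.hasFiniteIntegral).ne
  have hXtoReal : ∫ t in Ioc (0:ℝ) T, ((∫ x, |u t x| ^ (10:ℝ) ∂μ) ^ ((1:ℝ)/10)) ^ (5:ℝ)
      = X.toReal := by
    rw [integral_eq_lintegral_of_nonneg_ae hnnU hU.aestronglyMeasurable, hXeq]
  have hYtoReal : ∫ t in Ioc (0:ℝ) T, ((∫ x, |w t x| ^ (2:ℝ) ∂μ) ^ ((1:ℝ)/2)) ^ (2:ℝ)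
      = Y.toReal := by
    rw [integral_eq_lintegral_of_nonneg_ae hnnW2 hW2.aestronglyMeasurable, hYeq]
  have hZtoReal : ∫ t in Ioc (0:ℝ) T, ((∫ x, |w t x| ^ (10:ℝ) ∂μ) ^ ((1:ℝ)/10)) ^ (5:ℝ)
      = Z.toReal := by
    rw [integral_eq_lintegral_of_nonneg_ae hnnW10 hW10.aestronglyMeasurable, hZeq]
  -- temporal Hölder inequality
  have temporal : ∫⁻ t in Ioc (0:ℝ) T, FL t ≤
      c1 * (volume (Ioc (0:ℝ) T) ^ (1 - σ) * X ^ q1 * Y ^ (θ/2) * Z ^ r1) := by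
    calc ∫⁻ t in Ioc (0:ℝ) T, FL t
        ≤ ∫⁻ t in Ioc (0:ℝ) T,
            c1 * ((FA t ^ ((1:ℝ)/2)) ^ q1 * FB t ^ (θ/2) * (FD t ^ ((1:ℝ)/2)) ^ r1) :=
          lintegral_mono fun t => spatial t
      _ = c1 * ∫⁻ t in Ioc (0:ℝ) T,
            (FA t ^ ((1:ℝ)/2)) ^ q1 * FB t ^ (θ/2) * (FD t ^ ((1:ℝ)/2)) ^ r1 :=
          lintegral_const_mul' _ _ hc1ne
      _ ≤ c1 * (volume (Ioc (0:ℝ) T) ^ (1 - σ) * X ^ q1 * Y ^ (θ/2) * Z ^ r1) := by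
          refine mul_le_mul_right ?_ _
          have hh := holder3 (volume.restrict (Ioc (0:ℝ) T))
            (f := fun t => FA t ^ ((1:ℝ)/2)) (g := FB) (h := fun t => FD t ^ ((1:ℝ)/2))
            (hFAm.pow measurable_const).aemeasurable hFBm.aemeasurable
            (hFDm.pow measurable_const).aemeasurable
            hq10 (by linarith : (0:ℝ) ≤ θ/2) hr10 hσ1
          rw [Measure.restrict_apply_univ] at hh
          exact hh
  -- converting the left-hand side
  have hLint : ∀ t : ℝ,
      (∫ x, (|u t x| ^ (p - 1) * |w t x|) ^ (2:ℝ) ∂μ) ^ ((1:ℝ)/2) = (FL t).toReal := by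
    intro t
    have hnn : 0 ≤ᵐ[μ] fun x => (|u t x| ^ (p - 1) * |w t x|) ^ (2:ℝ) :=
      Filter.Eventually.of_forall fun x => by positivity
    have hm : AEStronglyMeasurable (fun x => (|u t x| ^ (p - 1) * |w t x|) ^ (2:ℝ)) μ :=
      ((((hum t).abs.pow measurable_const).mul (hwm t).abs).pow
        measurable_const).aestronglyMeasurable
    rw [integral_eq_lintegral_of_nonneg_ae hnn hm]
    simp only [hFLdef]
    rw [ENNReal.toReal_rpow]
  have hLHS : (∫ t in Ioc (0:ℝ) T,
        (∫ x, (|u t x| ^ (p - 1) * |w t x|) ^ (2:ℝ) ∂μ) ^ ((1:ℝ)/2))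
      = (∫⁻ t in Ioc (0:ℝ) T, ENNReal.ofReal ((FL t).toReal)).toReal := by
    simp_rw [hLint]
    exact integral_eq_lintegral_of_nonneg_ae
      (Filter.Eventually.of_forall fun t => ENNReal.toReal_nonneg)
      hFLm.ennreal_toReal.aestronglyMeasurable
  set Bound : ℝ≥0∞ := c1 * (volume (Ioc (0:ℝ) T) ^ (1 - σ) * X ^ q1 * Y ^ (θ/2) * Z ^ r1)
    with hBdef
  have hvol : volume (Ioc (0:ℝ) T) = ENNReal.ofReal T := by
    rw [Real.volume_Ioc, sub_zero]
  have hBfin : Bound ≠ ⊤ := by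
    rw [hBdef]
    refine ENNReal.mul_ne_top hc1ne
      (ENNReal.mul_ne_top (ENNReal.mul_ne_top (ENNReal.mul_ne_top ?_ ?_) ?_) ?_)
    · exact (ENNReal.rpow_lt_top_of_nonneg (by linarith)
        (by rw [hvol]; exact ENNReal.ofReal_ne_top)).ne
    · exact (ENNReal.rpow_lt_top_of_nonneg hq10 hXfin).ne
    · exact (ENNReal.rpow_lt_top_of_nonneg (by linarith) hYfin).ne
    · exact (ENNReal.rpow_lt_top_of_nonneg hr10 hZfin).ne
  have hle : (∫⁻ t in Ioc (0:ℝ) T, ENNReal.ofReal ((FL t).toReal)) ≤ Bound :=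
    le_trans (lintegral_mono fun t => ENNReal.ofReal_toReal_le) temporal
  rw [hLHS, hXtoReal, hYtoReal, hZtoReal]
  refine le_trans (ENNReal.toReal_mono hBfin hle) ?_
  -- final comparison of real numbers
  have hBtoReal : Bound.toReal =
      ((M ^ (1 - (q1 + θ + r1))) ^ ((1:ℝ)/2)) * (T ^ (1 - σ) * X.toReal ^ q1 *
        Y.toReal ^ (θ/2) * Z.toReal ^ r1) := by
    rw [hBdef, hvol, ENNReal.toReal_mul, ENNReal.toReal_mul, ENNReal.toReal_mul,
      ENNReal.toReal_mul, ← ENNReal.toReal_rpow, ← ENNReal.toReal_rpow,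
      ← ENNReal.toReal_rpow, ← ENNReal.toReal_rpow, ← ENNReal.toReal_rpow,
      ← ENNReal.toReal_rpow, ENNReal.toReal_ofReal hT.le, hMdef]
  rw [hBtoReal]
  have e3 : ((X.toReal ^ ((1:ℝ)/5)) ^ (p - 1)) = X.toReal ^ q1 := by
    rw [← Real.rpow_mul ENNReal.toReal_nonneg]; congr 1; rw [hq1def]; ring
  have e4 : ((Y.toReal ^ ((1:ℝ)/2)) ^ θ) = Y.toReal ^ (θ/2) := by
    rw [← Real.rpow_mul ENNReal.toReal_nonneg]; congr 1; ring
  have e5 : ((Z.toReal ^ ((1:ℝ)/5)) ^ (1 - θ)) = Z.toReal ^ r1 := by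
    rw [← Real.rpow_mul ENNReal.toReal_nonneg]; congr 1; rw [hr1def]; ring
  rw [e3, e4, e5]
  have hC : (M ^ (1 - (q1 + θ + r1))) ^ ((1:ℝ)/2) ≤
      ((1 + M) ^ (1 - (q1 + θ + r1))) ^ ((1:ℝ)/2) :=
    Real.rpow_le_rpow (Real.rpow_nonneg hM0 _)
      (Real.rpow_le_rpow hM0 (by linarith) (by linarith)) (by norm_num)
  calc (M ^ (1 - (q1 + θ + r1))) ^ ((1:ℝ)/2) * (T ^ (1 - σ) * X.toReal ^ q1 *
        Y.toReal ^ (θ/2) * Z.toReal ^ r1)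
      ≤ ((1 + M) ^ (1 - (q1 + θ + r1))) ^ ((1:ℝ)/2) * (T ^ (1 - σ) * X.toReal ^ q1 *
        Y.toReal ^ (θ/2) * Z.toReal ^ r1) := by
        apply mul_le_mul_of_nonneg_right hC
        have := Real.rpow_nonneg (ENNReal.toReal_nonneg : 0 ≤ X.toReal) q1
        positivity
    _ = ((1 + M) ^ (1 - (q1 + θ + r1))) ^ ((1:ℝ)/2) * T ^ (1 - σ) * X.toReal ^ q1 *
        Y.toReal ^ (θ/2) * Z.toReal ^ r1 := by ring
end

section
/- Let (X, μ) be a finite measure space with μ(X) > 0, let A > 0, and let a : X → ℝ be measurable with 0 ≤ a(x) ≤ A for all x. Let g : ℝ → ℝ be continuous with g(s)·s ≥ 0 for all s, and let h₀ : ℝ → ℝ be concave and monotone increasing with h₀(g(s)·s) ≥ s² + g(s)² for all |s| ≤ 1. Let v : X → ℝ be measurable with |v(x)| ≤ 1 for all x ∈ X. Then ∫_X a(x) ( g(v(x))² + v(x)² ) dμ ≤ (1 + A) · μ(X) · h₀( (1/μ(X)) ∫_X a(x) g(v(x)) v(x) dμ ). -/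
open MeasureTheory

/-- Let `(X, μ)` be a finite measure space with `μ X > 0`, `A > 0`,
and `a : X → ℝ` measurable with `0 ≤ a ≤ A`.  Let `g : ℝ → ℝ` be continuous with
`g(s)·s ≥ 0`, and `h₀ : ℝ → ℝ` concave and monotone increasing with
`h₀(g(s)·s) ≥ s² + g(s)²` for `|s| ≤ 1`.  Let `v : X → ℝ` be measurable with
`|v| ≤ 1`.  Then
`∫ a (g(v)² + v²) dμ ≤ (1 + A) μ(X) h₀( (1/μ(X)) ∫ a g(v) v dμ )`. -/
theorem stmt_15 {X : Type*} [MeasurableSpace X] (μ : Measure X) [IsFiniteMeasure μ]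
    (hμ : 0 < (μ Set.univ).toReal)
    (A : ℝ) (hA : 0 < A)
    (a : X → ℝ) (ha : Measurable a) (ha0 : ∀ x, 0 ≤ a x) (haA : ∀ x, a x ≤ A)
    (g : ℝ → ℝ) (hg : Continuous g) (hgsign : ∀ s : ℝ, 0 ≤ g s * s)
    (h₀ : ℝ → ℝ) (hconc : ConcaveOn ℝ Set.univ h₀) (hmono : Monotone h₀)
    (hh₀ : ∀ s : ℝ, |s| ≤ 1 → s ^ 2 + (g s) ^ 2 ≤ h₀ (g s * s))
    (v : X → ℝ) (hv : Measurable v) (hv1 : ∀ x, |v x| ≤ 1) :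
    (∫ x, a x * ((g (v x)) ^ 2 + (v x) ^ 2) ∂μ) ≤
      (1 + A) * (μ Set.univ).toReal *
        h₀ ((1 / (μ Set.univ).toReal) * ∫ x, a x * (g (v x) * v x) ∂μ) := by
  have hμ0 : NeZero μ := ⟨fun h => by simp [h] at hμ⟩
  set M := (μ Set.univ).toReal with hM
  have hA1 : (0:ℝ) < 1 + A := by linarith
  -- continuity of h₀
  have hcont : Continuous h₀ := by
    rw [← continuousOn_univ]
    exact hconc.continuousOn isOpen_univ
  -- bound for g on [-1,1]
  obtain ⟨C, hC⟩ := (isCompact_Icc (a := (-1:ℝ)) (b := 1)).exists_bound_of_continuousOn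
    hg.continuousOn
  have hC0 : 0 ≤ C := le_trans (norm_nonneg _) (hC 0 (by norm_num))
  set w : X → ℝ := fun x => g (v x) * v x with hw
  have hw0 : ∀ x, 0 ≤ w x := fun x => hgsign (v x)
  have hwC : ∀ x, w x ≤ C := by
    intro x
    calc w x ≤ |g (v x) * v x| := le_abs_self _
      _ = |g (v x)| * |v x| := abs_mul _ _
      _ ≤ C * 1 := by
          apply mul_le_mul _ (hv1 x) (abs_nonneg _) hC0
          exact hC _ (abs_le.mp (hv1 x))
      _ = C := mul_one C
  have hwmeas : Measurable w := (hg.measurable.comp hv).mul hv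
  -- integrability helper
  have hint : ∀ (f : X → ℝ), Measurable f → (∃ D, ∀ x, ‖f x‖ ≤ D) → Integrable f μ := by
    rintro f hf ⟨D, hD⟩
    exact ⟨hf.aestronglyMeasurable, HasFiniteIntegral.of_bounded (ae_of_all _ hD)⟩
  -- h₀ bounded on compacts
  obtain ⟨D, hD⟩ := (isCompact_Icc (a := (0:ℝ)) (b := A * C)).exists_bound_of_continuousOn
    hcont.continuousOn
  set φ : X → ℝ := fun x => a x * w x / (1 + A) with hφ
  have hφmem : ∀ x, φ x ∈ Set.Icc (0:ℝ) (A * C) := by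
    intro x
    constructor
    · exact div_nonneg (mul_nonneg (ha0 x) (hw0 x)) hA1.le
    · have h1 : a x * w x ≤ A * C :=
        mul_le_mul (haA x) (hwC x) (hw0 x) hA.le
      have : a x * w x / (1 + A) ≤ a x * w x := by
        rw [div_le_iff₀ hA1]
        nlinarith [mul_nonneg (ha0 x) (hw0 x)]
      linarith
  have hφmeas : Measurable φ := ((ha.mul hwmeas).div_const _)
  have hφint : Integrable φ μ := hint _ hφmeas ⟨A * C, fun x => by
    rw [Real.norm_eq_abs, abs_of_nonneg (hφmem x).1]; exact (hφmem x).2⟩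
  have hh₀φint : Integrable (h₀ ∘ φ) μ := hint _ (hcont.measurable.comp hφmeas)
    ⟨D, fun x => hD _ (hφmem x)⟩
  have hawint : Integrable (fun x => a x * w x) μ := hint _ (ha.mul hwmeas)
    ⟨A * C, fun x => by
      rw [Real.norm_eq_abs, abs_of_nonneg (mul_nonneg (ha0 x) (hw0 x))]
      exact mul_le_mul (haA x) (hwC x) (hw0 x) hA.le⟩
  -- h₀ 0 ≥ 0
  have hh00 : 0 ≤ h₀ 0 := by
    have := hh₀ 0 (by norm_num)
    have h2 : (0:ℝ) ≤ 0 ^ 2 + (g 0) ^ 2 := by positivity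
    simpa using le_trans h2 (by simpa using this)
  -- key pointwise lemma: t ∈ [0,1] → t * h₀ y ≤ h₀ (t * y)
  have hkey : ∀ (t y : ℝ), 0 ≤ t → t ≤ 1 → t * h₀ y ≤ h₀ (t * y) := by
    intro t y ht ht1
    have := hconc.2 (Set.mem_univ y) (Set.mem_univ 0) ht (by linarith : (0:ℝ) ≤ 1 - t)
      (by ring)
    simp only [smul_eq_mul, mul_zero, add_zero] at this
    nlinarith [mul_nonneg (by linarith : (0:ℝ) ≤ 1 - t) hh00]
  -- Step 1
  have step1 : (∫ x, a x * ((g (v x)) ^ 2 + (v x) ^ 2) ∂μ) ≤ ∫ x, a x * h₀ (w x) ∂μ := by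
    apply integral_mono
    · apply hint _ (ha.mul (((hg.measurable.comp hv).pow_const 2).add (hv.pow_const 2)))
      refine ⟨A * (C^2 + 1), fun x => ?_⟩
      show ‖a x * (g (v x) ^ 2 + v x ^ 2)‖ ≤ A * (C ^ 2 + 1)
      have h1 : (g (v x))^2 ≤ C^2 := by
        have := hC _ (abs_le.mp (hv1 x))
        rw [Real.norm_eq_abs] at this
        nlinarith [abs_nonneg (g (v x)), le_abs_self (g (v x)), neg_abs_le (g (v x))]
      have h2 : (v x)^2 ≤ 1 := by nlinarith [hv1 x, abs_nonneg (v x), le_abs_self (v x), neg_abs_le (v x)]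
      rw [Real.norm_eq_abs, abs_of_nonneg (mul_nonneg (ha0 x) (by positivity))]
      have := ha0 x; have := haA x
      nlinarith [sq_nonneg (g (v x)), sq_nonneg (v x)]
    · apply hint _ (ha.mul (hcont.measurable.comp hwmeas))
      obtain ⟨D', hD'⟩ := (isCompact_Icc (a := (0:ℝ)) (b := C)).exists_bound_of_continuousOn
        hcont.continuousOn
      refine ⟨A * D', fun x => ?_⟩
      show ‖a x * h₀ (w x)‖ ≤ A * D'
      rw [Real.norm_eq_abs, abs_mul, abs_of_nonneg (ha0 x)]
      have hD'0 : 0 ≤ D' := le_trans (norm_nonneg _) (hD' 0 (by constructor <;> [rfl; exact hC0]))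
      exact mul_le_mul (haA x) (hD' _ ⟨hw0 x, hwC x⟩) (abs_nonneg _) hA.le
    · intro x
      exact mul_le_mul_of_nonneg_left
        (by linarith [hh₀ (v x) (hv1 x)] : (g (v x))^2 + (v x)^2 ≤ h₀ (w x)) (ha0 x)
  -- Step 2
  have step2 : (∫ x, a x * h₀ (w x) ∂μ) ≤ ∫ x, (1 + A) * h₀ (φ x) ∂μ := by
    apply integral_mono
    · apply hint _ (ha.mul (hcont.measurable.comp hwmeas))
      obtain ⟨D', hD'⟩ := (isCompact_Icc (a := (0:ℝ)) (b := C)).exists_bound_of_continuousOn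
        hcont.continuousOn
      refine ⟨A * D', fun x => ?_⟩
      show ‖a x * h₀ (w x)‖ ≤ A * D'
      rw [Real.norm_eq_abs, abs_mul, abs_of_nonneg (ha0 x)]
      have hD'0 : 0 ≤ D' := le_trans (norm_nonneg _) (hD' 0 (by constructor <;> [rfl; exact hC0]))
      exact mul_le_mul (haA x) (hD' _ ⟨hw0 x, hwC x⟩) (abs_nonneg _) hA.le
    · exact (hh₀φint.const_mul _)
    · intro x
      have ht : 0 ≤ a x / (1 + A) := div_nonneg (ha0 x) hA1.le
      have ht1 : a x / (1 + A) ≤ 1 := by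
        rw [div_le_one hA1]; linarith [haA x]
      have := hkey (a x / (1 + A)) (w x) ht ht1
      have heq : a x / (1 + A) * w x = φ x := by rw [hφ]; ring
      rw [heq] at this
      calc a x * h₀ (w x) = (1 + A) * (a x / (1 + A) * h₀ (w x)) := by
            field_simp
        _ ≤ (1 + A) * h₀ (φ x) := by
            exact mul_le_mul_of_nonneg_left this hA1.le
  -- Jensen
  have jensen : (⨍ x, h₀ (φ x) ∂μ) ≤ h₀ (⨍ x, φ x ∂μ) :=
    hconc.le_map_average hcont.continuousOn isClosed_univ
      (ae_of_all _ fun x => Set.mem_univ _) hφint hh₀φint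
  rw [average_eq, average_eq] at jensen
  simp only [smul_eq_mul, ← hM] at jensen
  -- ∫ φ in terms of ∫ a w
  have hφeq : (∫ x, φ x ∂μ) = (∫ x, a x * w x ∂μ) / (1 + A) := by
    rw [hφ]; exact integral_div _ _
  have haw0 : 0 ≤ ∫ x, a x * w x ∂μ :=
    integral_nonneg fun x => mul_nonneg (ha0 x) (hw0 x)
  -- Step 4: monotonicity
  have step4 : h₀ (M⁻¹ * ∫ x, φ x ∂μ) ≤ h₀ ((1 / M) * ∫ x, a x * w x ∂μ) := by
    apply hmono
    rw [hφeq, one_div]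
    apply mul_le_mul_of_nonneg_left _ (by positivity)
    rw [div_le_iff₀ hA1]
    nlinarith
  calc (∫ x, a x * ((g (v x)) ^ 2 + (v x) ^ 2) ∂μ)
      ≤ ∫ x, (1 + A) * h₀ (φ x) ∂μ := le_trans step1 step2
    _ = (1 + A) * ∫ x, h₀ (φ x) ∂μ := integral_const_mul _ _
    _ ≤ (1 + A) * (M * h₀ (M⁻¹ * ∫ x, φ x ∂μ)) := by
        apply mul_le_mul_of_nonneg_left _ hA1.le
        calc (∫ x, h₀ (φ x) ∂μ) = M * (M⁻¹ * ∫ x, h₀ (φ x) ∂μ) := by field_simp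
          _ ≤ M * h₀ (M⁻¹ * ∫ x, φ x ∂μ) := mul_le_mul_of_nonneg_left jensen hμ.le
    _ ≤ (1 + A) * M * h₀ ((1 / M) * ∫ x, a x * w x ∂μ) := by
        rw [mul_assoc]
        exact mul_le_mul_of_nonneg_left
          (mul_le_mul_of_nonneg_left step4 hμ.le) hA1.le
end

section
/- Let (X, μ) be a measure space, let A > 0, and let a : X → ℝ be measurable with 0 ≤ a(x) ≤ A for all x. Let r > 1, p₀ > 2r, m̃, M̃ > 0, and let g : ℝ → ℝ be a measurable function satisfying m̃ |s|^{r+1} ≤ g(s)·s ≤ M̃ |s|^{r+1} for all |s| ≥ 1. Let D₀ > 0 and let v : X → ℝ be measurable with (∫_X |v|^{p₀} dμ)^{1/p₀} ≤ D₀, and set E = { x ∈ X : |v(x)| > 1 }. Then there is a constant C > 0, depending only on m̃, M̃, A, r and p₀, such that ∫_E a(x) ( v(x)² + g(v(x))² ) dμ ≤ C · D₀^{p₀(r−1)/(p₀−r−1)} · ( ∫_E a(x) g(v(x)) v(x) dμ )^{(p₀−2r)/(p₀−r−1)}. -/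
open MeasureTheory

private lemma memLp_of_int_rpow {X : Type*} [MeasurableSpace X] {μ : Measure X}
    {F : X → ℝ} {p : ℝ} (hp : 0 < p) (hF : AEStronglyMeasurable F μ)
    (hFnn : ∀ x, 0 ≤ F x) (hint : Integrable (fun x => F x ^ p) μ) :
    MemLp F (ENNReal.ofReal p) μ := by
  have qz : (ENNReal.ofReal p) ≠ 0 := by
    simp [ENNReal.ofReal_eq_zero, not_le, hp]
  have qt : (ENNReal.ofReal p) ≠ ⊤ := ENNReal.ofReal_ne_top
  refine (memLp_norm_rpow_iff hF qz qt).1 ?_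
  rw [ENNReal.div_self qz qt, memLp_one_iff_integrable]
  have h : (fun x => ‖F x‖ ^ (ENNReal.ofReal p).toReal) = fun x => F x ^ p := by
    funext x
    rw [Real.norm_of_nonneg (hFnn x), ENNReal.toReal_ofReal hp.le]
  rw [h]; exact hint

/-- (Superlinear damping at infinity.)  Let `r > 1`, `p₀ > 2r`,
`m, M, A > 0`.  There is a constant `C > 0`, depending only on `m, M, A, r, p₀`,
such that for every measure space `(X, μ)`, every measurable `a : X → ℝ` with
`0 ≤ a ≤ A`, every measurable `g : ℝ → ℝ` with `m|s|^{r+1} ≤ g(s)s ≤ M|s|^{r+1}` for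
`|s| ≥ 1`, every `D₀ > 0` and every measurable `v ∈ L^{p₀}(μ)` with
`‖v‖_{L^{p₀}} ≤ D₀`, setting `E = {x : |v x| > 1}`, one has
`∫_E a (v² + g(v)²) dμ ≤ C · D₀^{p₀(r−1)/(p₀−r−1)} · (∫_E a g(v) v dμ)^{(p₀−2r)/(p₀−r−1)}`. -/
theorem stmt_16 (m M A r p₀ : ℝ)
    (hm : 0 < m) (hM : 0 < M) (hA : 0 < A) (hr : 1 < r) (hp₀ : 2 * r < p₀) :
    ∃ C : ℝ, 0 < C ∧
      ∀ (X : Type*) [MeasurableSpace X] (μ : Measure X)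
        (a : X → ℝ), Measurable a → (∀ x, 0 ≤ a x) → (∀ x, a x ≤ A) →
      ∀ g : ℝ → ℝ, Measurable g →
        (∀ s : ℝ, 1 ≤ |s| → m * |s| ^ (r + 1) ≤ g s * s ∧ g s * s ≤ M * |s| ^ (r + 1)) →
      ∀ D₀ : ℝ, 0 < D₀ →
      ∀ v : X → ℝ, Measurable v → Integrable (fun x => |v x| ^ p₀) μ →
        (∫ x, |v x| ^ p₀ ∂μ) ^ (1 / p₀) ≤ D₀ →
      (∫ x in {x | 1 < |v x|}, a x * ((v x) ^ 2 + (g (v x)) ^ 2) ∂μ) ≤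
        C * D₀ ^ (p₀ * (r - 1) / (p₀ - r - 1)) *
          (∫ x in {x | 1 < |v x|}, a x * (g (v x) * v x) ∂μ)
            ^ ((p₀ - 2 * r) / (p₀ - r - 1)) := by
  have hden : 0 < p₀ - r - 1 := by nlinarith
  set θ : ℝ := (p₀ - 2 * r) / (p₀ - r - 1) with hθdef
  have hθpos : 0 < θ := div_pos (by linarith) hden
  have hθlt : θ < 1 := (div_lt_one hden).2 (by linarith)
  have h1θpos : 0 < 1 - θ := by linarith
  have h1θ : 1 - θ = (r - 1) / (p₀ - r - 1) := by
    rw [hθdef]; field_simp; ring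
  have hexp : (r + 1) * θ + p₀ * (1 - θ) = 2 * r := by
    rw [hθdef, h1θ]; field_simp; ring
  have hp₀pos : 0 < p₀ := by nlinarith
  refine ⟨(1 + M ^ 2) * m ^ (-θ) * A ^ (1 - θ), by positivity, ?_⟩
  intro X _ μ a ha ha0 haA g hg hgb D₀ hD₀ v hv hvint hvD
  set E : Set X := {x | 1 < |v x|} with hEdef
  have hE : MeasurableSet E := measurableSet_lt measurable_const hv.abs
  -- basic monotonicity of rpow of |v x| on E
  have hmono : ∀ x ∈ E, ∀ s t : ℝ, s ≤ t → |v x| ^ s ≤ |v x| ^ t := by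
    intro x hx s t hst
    exact (Real.rpow_le_rpow_left_iff hx).2 hst
  -- integrability of a * |v|^c on E for c ≤ p₀
  have key : ∀ c : ℝ, c ≤ p₀ → IntegrableOn (fun x => a x * |v x| ^ c) E μ := by
    intro c hc
    refine Integrable.mono' ((hvint.const_mul A).integrableOn)
      ((ha.mul (hv.abs.pow measurable_const)).aestronglyMeasurable) ?_
    filter_upwards [ae_restrict_mem hE] with x hx
    have h1 : (0:ℝ) ≤ a x * |v x| ^ c :=
      mul_nonneg (ha0 x) (Real.rpow_nonneg (abs_nonneg _) _)
    rw [Real.norm_of_nonneg h1]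
    exact mul_le_mul (haA x) (hmono x hx c p₀ hc)
      (Real.rpow_nonneg (abs_nonneg _) _) hA.le
  -- positivity of (g s) * s on E and bounds
  have hgvnn : ∀ x ∈ E, 0 < g (v x) * v x := by
    intro x hx
    have h1 : (1:ℝ) ≤ |v x| := le_of_lt hx
    have := (hgb (v x) h1).1
    have hp : 0 < m * |v x| ^ (r + 1) :=
      mul_pos hm (Real.rpow_pos_of_pos (lt_trans one_pos hx) _)
    linarith
  -- integrability of a * (g v * v) on E
  have hJmeas : Measurable fun x => a x * (g (v x) * v x) :=
    ha.mul ((hg.comp hv).mul hv)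
  have hJint : IntegrableOn (fun x => a x * (g (v x) * v x)) E μ := by
    refine Integrable.mono' ((hvint.const_mul (A * M)).integrableOn)
      hJmeas.aestronglyMeasurable ?_
    filter_upwards [ae_restrict_mem hE] with x hx
    have h1 : (1:ℝ) ≤ |v x| := le_of_lt hx
    have hgbd := (hgb (v x) h1).2
    have hpos := hgvnn x hx
    have h2 : (0:ℝ) ≤ a x * (g (v x) * v x) := mul_nonneg (ha0 x) hpos.le
    rw [Real.norm_of_nonneg h2]
    have h3 : g (v x) * v x ≤ M * |v x| ^ p₀ := by
      calc g (v x) * v x ≤ M * |v x| ^ (r + 1) := hgbd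
        _ ≤ M * |v x| ^ p₀ :=
          mul_le_mul_of_nonneg_left (hmono x hx _ _ (by linarith)) hM.le
    calc a x * (g (v x) * v x) ≤ A * (M * |v x| ^ p₀) := by
          apply mul_le_mul (haA x) h3 hpos.le hA.le
      _ = A * M * |v x| ^ p₀ := by ring
  have hJnn : 0 ≤ ∫ x in E, a x * (g (v x) * v x) ∂μ :=
    setIntegral_nonneg hE fun x hx => mul_nonneg (ha0 x) (hgvnn x hx).le
  set J : ℝ := ∫ x in E, a x * (g (v x) * v x) ∂μ with hJdef
  set I1 : ℝ := ∫ x in E, a x * |v x| ^ (r + 1) ∂μ with hI1def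
  set I2 : ℝ := ∫ x in E, a x * |v x| ^ p₀ ∂μ with hI2def
  set I3 : ℝ := ∫ x in E, a x * |v x| ^ (2 * r) ∂μ with hI3def
  have hI1nn : 0 ≤ I1 := setIntegral_nonneg hE fun x _ =>
    mul_nonneg (ha0 x) (Real.rpow_nonneg (abs_nonneg _) _)
  have hI2nn : 0 ≤ I2 := setIntegral_nonneg hE fun x _ =>
    mul_nonneg (ha0 x) (Real.rpow_nonneg (abs_nonneg _) _)
  -- step 1 : LHS ≤ (1 + M^2) * I3
  have hpw : ∀ x ∈ E, a x * ((v x) ^ 2 + (g (v x)) ^ 2) ≤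
      (1 + M ^ 2) * (a x * |v x| ^ (2 * r)) := by
    intro x hx
    have h1 : (1:ℝ) ≤ |v x| := le_of_lt hx
    have hv0 : (0:ℝ) < |v x| := lt_trans one_pos hx
    obtain ⟨hgl, hgu⟩ := hgb (v x) h1
    have hsq : (v x) ^ 2 ≤ |v x| ^ (2 * r) := by
      have : (v x) ^ 2 = |v x| ^ ((2:ℕ):ℝ) := by
        rw [Real.rpow_natCast, sq_abs]
      rw [this]
      exact hmono x hx _ _ (by push_cast; linarith)
    have hgabs : |g (v x)| ≤ M * |v x| ^ r := by
      have hmul : |g (v x)| * |v x| ≤ (M * |v x| ^ r) * |v x| := by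
        have e1 : |g (v x)| * |v x| = g (v x) * v x := by
          rw [← abs_mul, abs_of_pos (hgvnn x hx)]
        have e2 : (M * |v x| ^ r) * |v x| = M * |v x| ^ (r + 1) := by
          rw [Real.rpow_add hv0, Real.rpow_one]; ring
        rw [e1, e2]; exact hgu
      exact le_of_mul_le_mul_right hmul hv0
    have hgsq : (g (v x)) ^ 2 ≤ M ^ 2 * |v x| ^ (2 * r) := by
      have h2 : (g (v x)) ^ 2 ≤ (M * |v x| ^ r) ^ 2 := by
        rw [← sq_abs]
        exact pow_le_pow_left₀ (abs_nonneg _) hgabs 2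
      calc (g (v x)) ^ 2 ≤ (M * |v x| ^ r) ^ 2 := h2
        _ = M ^ 2 * |v x| ^ (2 * r) := by
          rw [mul_pow]
          congr 1
          rw [← Real.rpow_natCast (|v x| ^ r) 2, ← Real.rpow_mul (abs_nonneg _)]
          norm_num [mul_comm]
    calc a x * ((v x) ^ 2 + (g (v x)) ^ 2)
        ≤ a x * (|v x| ^ (2 * r) + M ^ 2 * |v x| ^ (2 * r)) :=
          mul_le_mul_of_nonneg_left (by linarith) (ha0 x)
      _ = (1 + M ^ 2) * (a x * |v x| ^ (2 * r)) := by ring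
  have hLHSint : IntegrableOn (fun x => a x * ((v x) ^ 2 + (g (v x)) ^ 2)) E μ := by
    refine Integrable.mono' (((key (2 * r) (by linarith)).const_mul (1 + M ^ 2)))
      ((ha.mul ((hv.pow_const 2).add ((hg.comp hv).pow_const 2))).aestronglyMeasurable) ?_
    filter_upwards [ae_restrict_mem hE] with x hx
    have hnn : (0:ℝ) ≤ a x * ((v x) ^ 2 + (g (v x)) ^ 2) :=
      mul_nonneg (ha0 x) (by positivity)
    rw [Real.norm_of_nonneg hnn]
    exact hpw x hx
  have step1 : (∫ x in E, a x * ((v x) ^ 2 + (g (v x)) ^ 2) ∂μ) ≤ (1 + M ^ 2) * I3 := by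
    have := setIntegral_mono_on hLHSint ((key (2 * r) (by linarith)).const_mul (1 + M ^ 2)) hE
      (fun x hx => hpw x hx)
    calc (∫ x in E, a x * ((v x) ^ 2 + (g (v x)) ^ 2) ∂μ)
        ≤ ∫ x in E, (1 + M ^ 2) * (a x * |v x| ^ (2 * r)) ∂μ := this
      _ = (1 + M ^ 2) * I3 := by rw [integral_const_mul]
  -- step 2 : Hölder, I3 ≤ I1 ^ θ * I2 ^ (1 - θ)
  have hpq : Real.HolderConjugate (1/θ) (1/(1-θ)) := by
    rw [Real.holderConjugate_iff]
    constructor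
    · rw [lt_div_iff₀ hθpos]; linarith
    · simp only [one_div, inv_inv]; ring
  have step2 : I3 ≤ I1 ^ θ * I2 ^ (1 - θ) := by
    set f : X → ℝ := fun x => (a x * |v x| ^ (r + 1)) ^ θ with hfdef
    set h : X → ℝ := fun x => (a x * |v x| ^ p₀) ^ (1 - θ) with hhdef
    have hfnn : ∀ x, 0 ≤ f x := fun x => Real.rpow_nonneg
      (mul_nonneg (ha0 x) (Real.rpow_nonneg (abs_nonneg _) _)) _
    have hhnn : ∀ x, 0 ≤ h x := fun x => Real.rpow_nonneg
      (mul_nonneg (ha0 x) (Real.rpow_nonneg (abs_nonneg _) _)) _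
    have hfp : (fun x => f x ^ (1/θ)) = fun x => a x * |v x| ^ (r + 1) := by
      funext x
      rw [hfdef, one_div, Real.rpow_rpow_inv
        (mul_nonneg (ha0 x) (Real.rpow_nonneg (abs_nonneg _) _)) hθpos.ne']
    have hhq : (fun x => h x ^ (1/(1-θ))) = fun x => a x * |v x| ^ p₀ := by
      funext x
      rw [hhdef, one_div, Real.rpow_rpow_inv
        (mul_nonneg (ha0 x) (Real.rpow_nonneg (abs_nonneg _) _)) h1θpos.ne']
    have hfmeas : Measurable f :=
      (ha.mul (hv.abs.pow measurable_const)).pow measurable_const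
    have hhmeas : Measurable h :=
      (ha.mul (hv.abs.pow measurable_const)).pow measurable_const
    have hfmem : MemLp f (ENNReal.ofReal (1/θ)) (μ.restrict E) := by
      refine memLp_of_int_rpow (by positivity) hfmeas.aestronglyMeasurable hfnn ?_
      rw [hfp]; exact key (r + 1) (by linarith)
    have hhmem : MemLp h (ENNReal.ofReal (1/(1-θ))) (μ.restrict E) := by
      refine memLp_of_int_rpow (by positivity) hhmeas.aestronglyMeasurable hhnn ?_
      rw [hhq]; exact key p₀ le_rfl
    have hold := integral_mul_le_Lp_mul_Lq_of_nonneg (μ := μ.restrict E) hpq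
      (ae_of_all _ hfnn) (ae_of_all _ hhnn) hfmem hhmem
    have hleft : (∫ x in E, f x * h x ∂μ) = I3 := by
      refine setIntegral_congr_fun hE fun x hx => ?_
      have hv0 : (0:ℝ) < |v x| := lt_trans one_pos hx
      have hann : 0 ≤ a x := ha0 x
      show (a x * |v x| ^ (r + 1)) ^ θ * (a x * |v x| ^ p₀) ^ (1 - θ)
          = a x * |v x| ^ (2 * r)
      rw [Real.mul_rpow hann (Real.rpow_nonneg (abs_nonneg _) _),
          Real.mul_rpow hann (Real.rpow_nonneg (abs_nonneg _) _),
          mul_mul_mul_comm,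
          ← Real.rpow_add' hann (by norm_num : θ + (1 - θ) ≠ 0)]
      rw [show θ + (1 - θ) = 1 by ring, Real.rpow_one,
          ← Real.rpow_mul (abs_nonneg _), ← Real.rpow_mul (abs_nonneg _),
          ← Real.rpow_add hv0]
      rw [show (r + 1) * θ + p₀ * (1 - θ) = 2 * r from hexp]
    have hrightf : (∫ x in E, f x ^ (1/θ) ∂μ) = I1 := by rw [hfp]
    have hrighth : (∫ x in E, h x ^ (1/(1-θ)) ∂μ) = I2 := by rw [hhq]
    have h1 : (1:ℝ) / (1/θ) = θ := one_div_one_div θ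
    have h2 : (1:ℝ) / (1/(1-θ)) = 1 - θ := one_div_one_div _
    calc I3 = ∫ x in E, f x * h x ∂μ := hleft.symm
      _ ≤ (∫ x in E, f x ^ (1/θ) ∂μ) ^ (1/(1/θ)) *
          (∫ x in E, h x ^ (1/(1-θ)) ∂μ) ^ (1/(1/(1-θ))) := hold
      _ = I1 ^ θ * I2 ^ (1 - θ) := by rw [hrightf, hrighth, h1, h2]
  -- step 3 : I1 ≤ J / m
  have step3 : I1 ≤ J / m := by
    rw [le_div_iff₀ hm, mul_comm]
    have : m * I1 = ∫ x in E, m * (a x * |v x| ^ (r + 1)) ∂μ := by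
      rw [integral_const_mul]
    rw [this]
    refine setIntegral_mono_on ((key (r + 1) (by linarith)).const_mul m) hJint hE ?_
    intro x hx
    have h1 : (1:ℝ) ≤ |v x| := le_of_lt hx
    have hgl := (hgb (v x) h1).1
    calc m * (a x * |v x| ^ (r + 1)) = a x * (m * |v x| ^ (r + 1)) := by ring
      _ ≤ a x * (g (v x) * v x) := mul_le_mul_of_nonneg_left hgl (ha0 x)
  -- step 4 : I2 ≤ A * D₀ ^ p₀
  have hIntNN : 0 ≤ ∫ x, |v x| ^ p₀ ∂μ :=
    integral_nonneg fun x => Real.rpow_nonneg (abs_nonneg _) _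
  have hDp : (∫ x, |v x| ^ p₀ ∂μ) ≤ D₀ ^ p₀ := by
    have h := Real.rpow_le_rpow (Real.rpow_nonneg hIntNN _) hvD hp₀pos.le
    rwa [← Real.rpow_mul hIntNN, one_div, inv_mul_cancel₀ hp₀pos.ne', Real.rpow_one] at h
  have step4 : I2 ≤ A * D₀ ^ p₀ := by
    have h1 : I2 ≤ ∫ x in E, A * |v x| ^ p₀ ∂μ := by
      refine setIntegral_mono_on (key p₀ le_rfl) ((hvint.const_mul A).integrableOn) hE ?_
      intro x _
      exact mul_le_mul_of_nonneg_right (haA x) (Real.rpow_nonneg (abs_nonneg _) _)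
    have h2 : (∫ x in E, A * |v x| ^ p₀ ∂μ) ≤ ∫ x, A * |v x| ^ p₀ ∂μ :=
      setIntegral_le_integral (hvint.const_mul A)
        (ae_of_all _ fun x => mul_nonneg hA.le (Real.rpow_nonneg (abs_nonneg _) _))
    have h3 : (∫ x, A * |v x| ^ p₀ ∂μ) = A * ∫ x, |v x| ^ p₀ ∂μ := integral_const_mul _ _
    calc I2 ≤ ∫ x in E, A * |v x| ^ p₀ ∂μ := h1
      _ ≤ A * ∫ x, |v x| ^ p₀ ∂μ := by rw [← h3]; exact h2
      _ ≤ A * D₀ ^ p₀ := mul_le_mul_of_nonneg_left hDp hA.le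
  -- assemble
  have hI1θ : I1 ^ θ ≤ (J / m) ^ θ := Real.rpow_le_rpow hI1nn step3 hθpos.le
  have hI2θ : I2 ^ (1 - θ) ≤ (A * D₀ ^ p₀) ^ (1 - θ) :=
    Real.rpow_le_rpow hI2nn step4 h1θpos.le
  have hprod : I1 ^ θ * I2 ^ (1 - θ) ≤ (J / m) ^ θ * (A * D₀ ^ p₀) ^ (1 - θ) :=
    mul_le_mul hI1θ hI2θ (Real.rpow_nonneg hI2nn _) (Real.rpow_nonneg (by positivity) _)
  have hrw : (1 + M ^ 2) * ((J / m) ^ θ * (A * D₀ ^ p₀) ^ (1 - θ))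
      = (1 + M ^ 2) * m ^ (-θ) * A ^ (1 - θ) * D₀ ^ (p₀ * (1 - θ)) * J ^ θ := by
    rw [Real.div_rpow hJnn hm.le, Real.mul_rpow hA.le (by positivity),
        Real.rpow_mul hD₀.le, Real.rpow_neg hm.le]
    ring
  have hgoalexp : p₀ * (r - 1) / (p₀ - r - 1) = p₀ * (1 - θ) := by
    rw [h1θ]; ring
  rw [hgoalexp]
  calc (∫ x in E, a x * ((v x) ^ 2 + (g (v x)) ^ 2) ∂μ)
      ≤ (1 + M ^ 2) * I3 := step1
    _ ≤ (1 + M ^ 2) * (I1 ^ θ * I2 ^ (1 - θ)) :=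
        mul_le_mul_of_nonneg_left step2 (by positivity)
    _ ≤ (1 + M ^ 2) * ((J / m) ^ θ * (A * D₀ ^ p₀) ^ (1 - θ)) :=
        mul_le_mul_of_nonneg_left hprod (by positivity)
    _ = (1 + M ^ 2) * m ^ (-θ) * A ^ (1 - θ) * D₀ ^ (p₀ * (1 - θ)) * J ^ θ := hrw
end

section
/- Let (X, μ) be a measure space, let A > 0, and let a : X → ℝ be measurable with 0 ≤ a(x) ≤ A for all x. Let 0 < r < 1, p₀ > 2, m̃, M̃ > 0, and let g : ℝ → ℝ be a measurable function satisfying m̃ |s|^{r+1} ≤ g(s)·s ≤ M̃ |s|^{r+1} for all |s| ≥ 1. Let D₀ > 0 and let v : X → ℝ be measurable with (∫_X |v|^{p₀} dμ)^{1/p₀} ≤ D₀, and set E = { x ∈ X : |v(x)| > 1 }. Then there is a constant C > 0, depending only on m̃, M̃, A, r and p₀, such that ∫_E a(x) ( v(x)² + g(v(x))² ) dμ ≤ C · D₀^{p₀(1−r)/(p₀−r−1)} · ( ∫_E a(x) g(v(x)) v(x) dμ )^{(p₀−2)/(p₀−1−r)}. -/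
open MeasureTheory

set_option maxHeartbeats 1000000

lemma aux_alg (α γ K L I : ℝ) (hα : 0 < α) (hγ : 0 < γ) (hK : 0 < K) (hL : 0 < L) (hI : 0 < I) :
    K * ((L/(K*I)) ^ (1/(α+γ))) ^ α * I + ((L/(K*I)) ^ (1/(α+γ))) ^ (-γ) * L
      = 2 * ((K*I) ^ (γ/(α+γ)) * L ^ (α/(α+γ))) := by
  have hβ : 0 < α + γ := by linarith
  have hKI : 0 < K * I := mul_pos hK hI
  have hQ : 0 < L / (K * I) := div_pos hL hKI
  have e0 : ∀ z : ℝ, ((L/(K*I)) ^ (1/(α+γ))) ^ z = L ^ (z/(α+γ)) / (K*I) ^ (z/(α+γ)) := by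
    intro z
    rw [← Real.rpow_mul hQ.le, Real.div_rpow hL.le hKI.le]
    ring_nf
  rw [e0, e0]
  have eLneg : L ^ (-γ/(α+γ)) = (L ^ (γ/(α+γ)))⁻¹ := by
    rw [← Real.rpow_neg hL.le]; ring_nf
  have eKIneg : (K*I) ^ (-γ/(α+γ)) = ((K*I) ^ (γ/(α+γ)))⁻¹ := by
    rw [← Real.rpow_neg hKI.le]; ring_nf
  have hLsplit : L = L ^ (γ/(α+γ)) * L ^ (α/(α+γ)) := by
    rw [← Real.rpow_add hL]
    rw [show γ/(α+γ) + α/(α+γ) = 1 by field_simp; ring, Real.rpow_one]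
  have p1 : K * (L ^ (α/(α+γ)) / (K*I) ^ (α/(α+γ))) * I = (K*I) ^ (γ/(α+γ)) * L ^ (α/(α+γ)) := by
    rw [show γ/(α+γ) = 1 - α/(α+γ) by field_simp; ring, Real.rpow_sub hKI, Real.rpow_one]
    ring
  have p2 : (L ^ (-γ/(α+γ)) / (K*I) ^ (-γ/(α+γ))) * L = (K*I) ^ (γ/(α+γ)) * L ^ (α/(α+γ)) := by
    rw [eLneg, eKIneg]
    have hLp : (0:ℝ) < L ^ (γ/(α+γ)) := Real.rpow_pos_of_pos hL _
    field_simp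
    nth_rewrite 1 [hLsplit]
    ring
  rw [p1, p2]; ring

/-- (Sublinear damping at infinity.)  Let `0 < r < 1`, `p₀ > 2`,
`m, M, A > 0`.  There is a constant `C > 0`, depending only on `m, M, A, r, p₀`,
such that for every measure space `(X, μ)`, every measurable `a : X → ℝ` with
`0 ≤ a ≤ A`, every measurable `g : ℝ → ℝ` with `m|s|^{r+1} ≤ g(s)s ≤ M|s|^{r+1}` for
`|s| ≥ 1`, every `D₀ > 0` and every measurable `v ∈ L^{p₀}(μ)` with
`‖v‖_{L^{p₀}} ≤ D₀`, setting `E = {x : |v x| > 1}`, one has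
`∫_E a (v² + g(v)²) dμ ≤ C · D₀^{p₀(1−r)/(p₀−r−1)} · (∫_E a g(v) v dμ)^{(p₀−2)/(p₀−1−r)}`. -/
theorem stmt_17 (m M A r p₀ : ℝ)
    (hm : 0 < m) (hM : 0 < M) (hA : 0 < A) (hr0 : 0 < r) (hr1 : r < 1) (hp₀ : 2 < p₀) :
    ∃ C : ℝ, 0 < C ∧
      ∀ (X : Type*) [MeasurableSpace X] (μ : Measure X)
        (a : X → ℝ), Measurable a → (∀ x, 0 ≤ a x) → (∀ x, a x ≤ A) →
      ∀ g : ℝ → ℝ, Measurable g →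
        (∀ s : ℝ, 1 ≤ |s| → m * |s| ^ (r + 1) ≤ g s * s ∧ g s * s ≤ M * |s| ^ (r + 1)) →
      ∀ D₀ : ℝ, 0 < D₀ →
      ∀ v : X → ℝ, Measurable v → Integrable (fun x => |v x| ^ p₀) μ →
        (∫ x, |v x| ^ p₀ ∂μ) ^ (1 / p₀) ≤ D₀ →
      (∫ x in {x | 1 < |v x|}, a x * ((v x) ^ 2 + (g (v x)) ^ 2) ∂μ) ≤
        C * D₀ ^ (p₀ * (1 - r) / (p₀ - r - 1)) *
          (∫ x in {x | 1 < |v x|}, a x * (g (v x) * v x) ∂μ)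
            ^ ((p₀ - 2) / (p₀ - 1 - r)) := by
  have hp0 : 0 < p₀ := by linarith
  have hrp : 0 < 1 - r := by linarith
  have hp2 : 0 < p₀ - 2 := by linarith
  have hβ : 0 < p₀ - 1 - r := by linarith
  set β := p₀ - 1 - r with hβdef
  set θ := (p₀ - 2) / β with hθdef
  have hθpos : 0 < θ := div_pos hp2 hβ
  have h1θ : 1 - θ = (1 - r) / β := by
    rw [hθdef]; field_simp; rw [hβdef]; ring
  have h1θpos : 0 < 1 - θ := by rw [h1θ]; exact div_pos hrp hβ
  set K := (1 + M ^ 2) / m with hKdef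
  have hK : 0 < K := by positivity
  refine ⟨2 * K * (M * A) ^ (1 - θ) + 2 * (K ^ θ * A ^ (1 - θ)) + 1, by positivity, ?_⟩
  intro X _ μ a ha ha0 haA g hg hgr D₀ hD₀ v hv hvint hvD
  have habs2 : ∀ s : ℝ, |s| ^ ((2:ℝ)) = s ^ 2 := fun s => by
    rw [show ((2:ℝ)) = ((2:ℕ):ℝ) by norm_num, Real.rpow_natCast, sq_abs]
  set E := {x | 1 < |v x|} with hEdef
  have hE : MeasurableSet E := measurableSet_lt measurable_const hv.abs
  -- L^{p₀} bound
  have hD : ∫ x, |v x| ^ p₀ ∂μ ≤ D₀ ^ p₀ := by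
    have h0 : 0 ≤ ∫ x, |v x| ^ p₀ ∂μ :=
      integral_nonneg fun x => Real.rpow_nonneg (abs_nonneg _) _
    calc ∫ x, |v x| ^ p₀ ∂μ = ((∫ x, |v x| ^ p₀ ∂μ) ^ (1/p₀)) ^ p₀ := by
          rw [← Real.rpow_mul h0, one_div_mul_cancel hp0.ne', Real.rpow_one]
      _ ≤ D₀ ^ p₀ := Real.rpow_le_rpow (Real.rpow_nonneg h0 _) hvD hp0.le
  -- integrability helper
  have hint : ∀ (f : X → ℝ), Measurable f → ∀ c : ℝ,
      (∀ x ∈ E, |f x| ≤ c * |v x| ^ p₀) → IntegrableOn f E μ := by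
    intro f hf c hb
    refine Integrable.mono ((hvint.const_mul c).integrableOn) hf.aestronglyMeasurable.restrict ?_
    filter_upwards [ae_restrict_mem hE] with x hx
    rw [Real.norm_eq_abs, Real.norm_eq_abs]
    exact (hb x hx).trans (le_abs_self _)
  -- basic pointwise facts on E
  have hmem : ∀ x ∈ E, 1 < |v x| := fun x hx => hx
  have hgsq : ∀ x ∈ E, (g (v x)) ^ 2 ≤ M ^ 2 * |v x| ^ (r + 1) := by
    intro x hx
    have hs1 : 1 < |v x| := hmem x hx
    have hsp : (0:ℝ) < |v x| := lt_trans one_pos hs1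
    obtain ⟨hlo, hhi⟩ := hgr (v x) hs1.le
    have hrp1 : (0:ℝ) ≤ m * |v x| ^ (r+1) := by positivity
    have hgs0 : 0 ≤ g (v x) * v x := le_trans hrp1 hlo
    have hsq : (g (v x) * v x) ^ 2 ≤ (M * |v x| ^ (r+1)) ^ 2 := by nlinarith
    have hadd : |v x| ^ (r+1) * |v x| ^ (r+1) = |v x| ^ (2*r) * |v x| ^ ((2:ℝ)) := by
      rw [← Real.rpow_add hsp, ← Real.rpow_add hsp]
      congr 1
      ring
    have hvsq : (0:ℝ) < (v x) ^ 2 := by nlinarith [sq_abs (v x)]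
    have h2r : |v x| ^ (2*r) ≤ |v x| ^ (r+1) :=
      Real.rpow_le_rpow_of_exponent_le hs1.le (by linarith)
    have hmid : (g (v x)) ^ 2 * (v x) ^ 2 ≤ (M ^ 2 * |v x| ^ (2*r)) * (v x) ^ 2 := by
      calc (g (v x)) ^ 2 * (v x) ^ 2 = (g (v x) * v x) ^ 2 := by ring
        _ ≤ (M * |v x| ^ (r+1)) ^ 2 := hsq
        _ = M ^ 2 * (|v x| ^ (r+1) * |v x| ^ (r+1)) := by ring
        _ = M ^ 2 * (|v x| ^ (2*r) * |v x| ^ ((2:ℝ))) := by rw [hadd]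
        _ = (M ^ 2 * |v x| ^ (2*r)) * (v x) ^ 2 := by rw [habs2]; ring
    have := le_of_mul_le_mul_right hmid hvsq
    calc (g (v x)) ^ 2 ≤ M ^ 2 * |v x| ^ (2*r) := this
      _ ≤ M ^ 2 * |v x| ^ (r+1) := by nlinarith
  have hprp : ∀ x ∈ E, |v x| ^ (r+1) ≤ |v x| ^ p₀ := fun x hx =>
    Real.rpow_le_rpow_of_exponent_le (hmem x hx).le (by linarith)
  have hv2p : ∀ x ∈ E, (v x) ^ 2 ≤ |v x| ^ p₀ := by
    intro x hx
    rw [← habs2]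
    exact Real.rpow_le_rpow_of_exponent_le (hmem x hx).le (by linarith)
  -- the key pointwise estimate
  have key : ∀ x ∈ E, ∀ T : ℝ, 1 ≤ T →
      a x * ((v x) ^ 2 + (g (v x)) ^ 2) ≤
        (1 + M ^ 2) * T ^ (1-r) * (a x * |v x| ^ (r+1)) + T ^ (2-p₀) * (a x * |v x| ^ p₀) := by
    intro x hx T hT
    have hs1 : 1 < |v x| := hmem x hx
    have hsp : (0:ℝ) < |v x| := lt_trans one_pos hs1
    have hT0 : (0:ℝ) < T := lt_of_lt_of_le one_pos hT
    have hT1r : 1 ≤ T ^ (1-r) := Real.one_le_rpow hT hrp.le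
    have hTnr : 0 < T ^ (2-p₀) := Real.rpow_pos_of_pos hT0 _
    have hrp1 : (0:ℝ) ≤ |v x| ^ (r+1) := Real.rpow_nonneg (abs_nonneg _) _
    have hgpart : (g (v x)) ^ 2 ≤ M ^ 2 * T ^ (1-r) * |v x| ^ (r+1) := by
      calc (g (v x)) ^ 2 ≤ M ^ 2 * |v x| ^ (r+1) := hgsq x hx
        _ = 1 * (M ^ 2 * |v x| ^ (r+1)) := by ring
        _ ≤ T ^ (1-r) * (M ^ 2 * |v x| ^ (r+1)) :=
            mul_le_mul_of_nonneg_right hT1r (by positivity)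
        _ = M ^ 2 * T ^ (1-r) * |v x| ^ (r+1) := by ring
    have hspart : (v x) ^ 2 ≤ T ^ (1-r) * |v x| ^ (r+1) + T ^ (2-p₀) * |v x| ^ p₀ := by
      have hp0v : (0:ℝ) ≤ |v x| ^ p₀ := Real.rpow_nonneg (abs_nonneg _) _
      rcases le_or_gt (|v x|) T with hc | hc
      · have h1 : (v x) ^ 2 = |v x| ^ (1-r) * |v x| ^ (r+1) := by
          rw [← Real.rpow_add hsp, show (1-r) + (r+1) = (2:ℝ) by ring, habs2]
        have h2 : |v x| ^ (1-r) ≤ T ^ (1-r) := Real.rpow_le_rpow (abs_nonneg _) hc hrp.le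
        have h3 : (v x) ^ 2 ≤ T ^ (1-r) * |v x| ^ (r+1) := by
          rw [h1]; exact mul_le_mul_of_nonneg_right h2 hrp1
        have h4 : 0 ≤ T ^ (2-p₀) * |v x| ^ p₀ := by positivity
        linarith
      · have h1 : (v x) ^ 2 = |v x| ^ (2-p₀) * |v x| ^ p₀ := by
          rw [← Real.rpow_add hsp, show (2-p₀) + p₀ = (2:ℝ) by ring, habs2]
        have h2 : |v x| ^ (2-p₀) ≤ T ^ (2-p₀) := by
          rw [show (2-p₀) = -(p₀-2) by ring, Real.rpow_neg (abs_nonneg _), Real.rpow_neg hT0.le]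
          have h3 : T ^ (p₀-2) ≤ |v x| ^ (p₀-2) :=
            Real.rpow_le_rpow hT0.le hc.le hp2.le
          exact inv_anti₀ (Real.rpow_pos_of_pos hT0 _) h3
        have h4 : 0 ≤ T ^ (1-r) * |v x| ^ (r+1) := by positivity
        nlinarith [mul_le_mul_of_nonneg_right h2 hp0v]
    have hsum : (v x) ^ 2 + (g (v x)) ^ 2 ≤
        (1 + M ^ 2) * T ^ (1-r) * |v x| ^ (r+1) + T ^ (2-p₀) * |v x| ^ p₀ := by
      nlinarith
    calc a x * ((v x) ^ 2 + (g (v x)) ^ 2)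
        ≤ a x * ((1 + M ^ 2) * T ^ (1-r) * |v x| ^ (r+1) + T ^ (2-p₀) * |v x| ^ p₀) :=
          mul_le_mul_of_nonneg_left hsum (ha0 x)
      _ = (1 + M ^ 2) * T ^ (1-r) * (a x * |v x| ^ (r+1)) + T ^ (2-p₀) * (a x * |v x| ^ p₀) := by
          ring
  -- integrand bounds on E
  have hrpnn : ∀ x : X, (0:ℝ) ≤ |v x| ^ p₀ := fun x => Real.rpow_nonneg (abs_nonneg _) _
  have bnd1 : ∀ x ∈ E, |a x * ((v x) ^ 2 + (g (v x)) ^ 2)| ≤ (A * (1 + M ^ 2)) * |v x| ^ p₀ := by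
    intro x hx
    have h1 := hv2p x hx
    have h2 : (g (v x)) ^ 2 ≤ M ^ 2 * |v x| ^ p₀ :=
      (hgsq x hx).trans (mul_le_mul_of_nonneg_left (hprp x hx) (by positivity))
    have hnn : (0:ℝ) ≤ (v x) ^ 2 + (g (v x)) ^ 2 := by positivity
    rw [abs_of_nonneg (mul_nonneg (ha0 x) hnn)]
    calc a x * ((v x) ^ 2 + (g (v x)) ^ 2) ≤ A * ((v x) ^ 2 + (g (v x)) ^ 2) :=
        mul_le_mul_of_nonneg_right (haA x) hnn
      _ ≤ A * (|v x| ^ p₀ + M ^ 2 * |v x| ^ p₀) := mul_le_mul_of_nonneg_left (by linarith) hA.le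
      _ = (A * (1 + M ^ 2)) * |v x| ^ p₀ := by ring
  have hgs0 : ∀ x ∈ E, 0 ≤ g (v x) * v x := by
    intro x hx
    exact le_trans (by positivity) (hgr (v x) (hmem x hx).le).1
  have hgub : ∀ x ∈ E, g (v x) * v x ≤ M * |v x| ^ p₀ := by
    intro x hx
    exact (hgr (v x) (hmem x hx).le).2.trans (mul_le_mul_of_nonneg_left (hprp x hx) hM.le)
  have bnd2 : ∀ x ∈ E, |a x * (g (v x) * v x)| ≤ (A * M) * |v x| ^ p₀ := by
    intro x hx
    rw [abs_of_nonneg (mul_nonneg (ha0 x) (hgs0 x hx))]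
    calc a x * (g (v x) * v x) ≤ A * (g (v x) * v x) :=
        mul_le_mul_of_nonneg_right (haA x) (hgs0 x hx)
      _ ≤ A * (M * |v x| ^ p₀) := mul_le_mul_of_nonneg_left (hgub x hx) hA.le
      _ = (A * M) * |v x| ^ p₀ := by ring
  have bnd3 : ∀ x ∈ E, |a x * |v x| ^ (r+1)| ≤ A * |v x| ^ p₀ := by
    intro x hx
    rw [abs_of_nonneg (mul_nonneg (ha0 x) (Real.rpow_nonneg (abs_nonneg _) _))]
    exact mul_le_mul (haA x) (hprp x hx) (Real.rpow_nonneg (abs_nonneg _) _) hA.le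
  have bnd4 : ∀ x ∈ E, |a x * |v x| ^ p₀| ≤ A * |v x| ^ p₀ := by
    intro x hx
    rw [abs_of_nonneg (mul_nonneg (ha0 x) (hrpnn x))]
    exact mul_le_mul_of_nonneg_right (haA x) (hrpnn x)
  -- integrability
  have hf1 : IntegrableOn (fun x => a x * ((v x) ^ 2 + (g (v x)) ^ 2)) E μ :=
    hint _ (ha.mul ((hv.pow_const 2).add ((hg.comp hv).pow_const 2))) _ bnd1
  have hf2 : IntegrableOn (fun x => a x * (g (v x) * v x)) E μ :=
    hint _ (ha.mul (((hg.comp hv)).mul hv)) _ bnd2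
  have hf3 : IntegrableOn (fun x => a x * |v x| ^ (r+1)) E μ :=
    hint _ (ha.mul ((Real.continuous_rpow_const (by positivity)).measurable.comp hv.abs)) _ bnd3
  have hf4 : IntegrableOn (fun x => a x * |v x| ^ p₀) E μ :=
    hint _ (ha.mul ((Real.continuous_rpow_const (by positivity)).measurable.comp hv.abs)) _ bnd4
  -- integral abbreviations
  set Iv := ∫ x in E, a x * (g (v x) * v x) ∂μ with hIvdef
  set Jv := ∫ x in E, a x * |v x| ^ (r+1) ∂μ with hJvdef
  set Hv := ∫ x in E, a x * |v x| ^ p₀ ∂μ with hHvdef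
  set lhs := ∫ x in E, a x * ((v x) ^ 2 + (g (v x)) ^ 2) ∂μ with hlhsdef
  have hI0 : 0 ≤ Iv := by
    rw [hIvdef]
    exact setIntegral_nonneg hE fun x hx => mul_nonneg (ha0 x) (hgs0 x hx)
  have hJ0 : 0 ≤ Jv := by
    rw [hJvdef]
    exact setIntegral_nonneg hE fun x hx => mul_nonneg (ha0 x) (Real.rpow_nonneg (abs_nonneg _) _)
  have hH : Hv ≤ A * D₀ ^ p₀ := by
    rw [hHvdef]
    calc ∫ x in E, a x * |v x| ^ p₀ ∂μ ≤ ∫ x in E, A * |v x| ^ p₀ ∂μ :=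
        setIntegral_mono_on hf4 ((hvint.const_mul A).integrableOn) hE
          (fun x _ => mul_le_mul_of_nonneg_right (haA x) (hrpnn x))
      _ ≤ ∫ x, A * |v x| ^ p₀ ∂μ := setIntegral_le_integral (hvint.const_mul A)
          (Filter.Eventually.of_forall fun x => by positivity)
      _ = A * ∫ x, |v x| ^ p₀ ∂μ := integral_const_mul A _
      _ ≤ A * D₀ ^ p₀ := mul_le_mul_of_nonneg_left hD hA.le
  have hmJI : m * Jv ≤ Iv := by
    rw [hJvdef, hIvdef, ← integral_const_mul]
    refine setIntegral_mono_on (hf3.const_mul m) hf2 hE ?_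
    intro x hx
    have h' : m * (a x * |v x| ^ (r+1)) = a x * (m * |v x| ^ (r+1)) := by ring
    rw [h']
    exact mul_le_mul_of_nonneg_left (hgr (v x) (hmem x hx).le).1 (ha0 x)
  have hIub : Iv ≤ M * (A * D₀ ^ p₀) := by
    have step : Iv ≤ M * Hv := by
      rw [hIvdef, hHvdef, ← integral_const_mul]
      refine setIntegral_mono_on hf2 (hf4.const_mul M) hE ?_
      intro x hx
      calc a x * (g (v x) * v x) ≤ a x * (M * |v x| ^ p₀) :=
          mul_le_mul_of_nonneg_left (hgub x hx) (ha0 x)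
        _ = M * (a x * |v x| ^ p₀) := by ring
    exact step.trans (mul_le_mul_of_nonneg_left hH hM.le)
  -- main T-parametrized bound
  have hmain : ∀ T : ℝ, 1 ≤ T →
      lhs ≤ K * T ^ (1-r) * Iv + T ^ (2-p₀) * (A * D₀ ^ p₀) := by
    intro T hT
    have hT0 : (0:ℝ) < T := lt_of_lt_of_le one_pos hT
    have t1 : (0:ℝ) < T ^ (1-r) := Real.rpow_pos_of_pos hT0 _
    have t2 : (0:ℝ) < T ^ (2-p₀) := Real.rpow_pos_of_pos hT0 _
    have step1 : lhs ≤
        ∫ x in E, ((1 + M ^ 2) * T ^ (1-r) * (a x * |v x| ^ (r+1))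
          + T ^ (2-p₀) * (a x * |v x| ^ p₀)) ∂μ := by
      rw [hlhsdef]
      exact setIntegral_mono_on hf1 ((hf3.const_mul _).add (hf4.const_mul _)) hE
        (fun x hx => key x hx T hT)
    rw [integral_add (hf3.const_mul _) (hf4.const_mul _), integral_const_mul,
      integral_const_mul, ← hJvdef, ← hHvdef] at step1
    have c1 : (1 + M ^ 2) * T ^ (1-r) * Jv ≤ K * T ^ (1-r) * Iv := by
      have e : (1 + M ^ 2) * T ^ (1-r) * Jv = (K * T ^ (1-r)) * (m * Jv) := by
        rw [hKdef]; field_simp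
      rw [e, show K * T ^ (1-r) * Iv = (K * T ^ (1-r)) * Iv by ring]
      exact mul_le_mul_of_nonneg_left hmJI (mul_pos hK t1).le
    have c2 : T ^ (2-p₀) * Hv ≤ T ^ (2-p₀) * (A * D₀ ^ p₀) :=
      mul_le_mul_of_nonneg_left hH t2.le
    linarith
  -- rewrite goal exponents
  have hexp : p₀ * (1 - r) / (p₀ - r - 1) = p₀ * (1 - θ) := by
    have hne1 : p₀ - r - 1 ≠ 0 := ne_of_gt (by linarith)
    have hne2 : p₀ - 1 - r ≠ 0 := ne_of_gt (by linarith)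
    rw [h1θ, hβdef]
    field_simp
    ring
  rw [hexp]
  have hDσ : (0:ℝ) < D₀ ^ (p₀ * (1 - θ)) := Real.rpow_pos_of_pos hD₀ _
  have hIθ0 : 0 ≤ Iv ^ θ := Real.rpow_nonneg hI0 _
  have hKθ : (0:ℝ) < K ^ θ := Real.rpow_pos_of_pos hK _
  have hAθ : (0:ℝ) < A ^ (1 - θ) := Real.rpow_pos_of_pos hA _
  have hMAθ : (0:ℝ) < (M * A) ^ (1 - θ) := Real.rpow_pos_of_pos (mul_pos hM hA) _
  rcases eq_or_lt_of_le hI0 with hIz | hIp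
  · -- Iv = 0
    have hJz : Jv = 0 := by
      have h1 : m * Jv ≤ 0 := by rw [hIz]; exact hmJI
      nlinarith
    have hae : (fun x => a x * |v x| ^ (r+1)) =ᵐ[μ.restrict E] 0 := by
      refine (integral_eq_zero_iff_of_nonneg (fun x => mul_nonneg (ha0 x) (Real.rpow_nonneg (abs_nonneg _) _)) hf3).mp ?_
      rw [← hJvdef]; exact hJz
    have hae2 : (fun x => a x * ((v x) ^ 2 + (g (v x)) ^ 2)) =ᵐ[μ.restrict E] 0 := by
      filter_upwards [hae, ae_restrict_mem hE] with x h0 hx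
      have hsp : (0:ℝ) < |v x| ^ (r+1) :=
        Real.rpow_pos_of_pos (lt_trans one_pos (hmem x hx)) _
      have ha' : a x = 0 := by
        rcases mul_eq_zero.mp h0 with h | h
        · exact h
        · exact absurd h hsp.ne'
      simp [ha']
    have hlz : lhs = 0 := by
      rw [hlhsdef]; exact integral_eq_zero_of_ae hae2
    rw [hlz, ← hIz, Real.zero_rpow hθpos.ne', mul_zero]
  · rcases le_or_gt (A * D₀ ^ p₀) (K * Iv) with hc | hc
    · -- T = 1
      have h1 := hmain 1 le_rfl
      simp only [Real.one_rpow, mul_one, one_mul] at h1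
      have h2 : lhs ≤ 2 * (K * Iv) := by linarith
      have hIsplit : Iv = Iv ^ (1 - θ) * Iv ^ θ := by
        rw [← Real.rpow_add hIp, sub_add_cancel, Real.rpow_one]
      have hIup : Iv ^ (1 - θ) ≤ (M * (A * D₀ ^ p₀)) ^ (1 - θ) :=
        Real.rpow_le_rpow hIp.le hIub h1θpos.le
      have hMAD : (M * (A * D₀ ^ p₀)) ^ (1 - θ) = (M * A) ^ (1 - θ) * D₀ ^ (p₀ * (1 - θ)) := by
        rw [show M * (A * D₀ ^ p₀) = (M * A) * D₀ ^ p₀ by ring,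
          Real.mul_rpow (by positivity) (by positivity), Real.rpow_mul hD₀.le]
      calc lhs ≤ 2 * (K * Iv) := h2
        _ = 2 * K * (Iv ^ (1 - θ) * Iv ^ θ) := by rw [← hIsplit]; ring
        _ ≤ 2 * K * (((M * A) ^ (1 - θ) * D₀ ^ (p₀ * (1 - θ))) * Iv ^ θ) := by
            refine mul_le_mul_of_nonneg_left
              (mul_le_mul_of_nonneg_right (hIup.trans_eq hMAD) hIθ0) (by linarith)
        _ = (2 * K * (M * A) ^ (1 - θ)) * D₀ ^ (p₀ * (1 - θ)) * Iv ^ θ := by ring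
        _ ≤ (2 * K * (M * A) ^ (1 - θ) + 2 * (K ^ θ * A ^ (1 - θ)) + 1)
              * D₀ ^ (p₀ * (1 - θ)) * Iv ^ θ := by
            refine mul_le_mul_of_nonneg_right
              (mul_le_mul_of_nonneg_right ?_ hDσ.le) hIθ0
            nlinarith [mul_pos hKθ hAθ]
    · -- optimal T
      set L := A * D₀ ^ p₀ with hLdef
      have hL : (0:ℝ) < L := by rw [hLdef]; positivity
      set T := (L / (K * Iv)) ^ (1 / β) with hTdef
      have hQ1 : 1 ≤ L / (K * Iv) := by
        rw [le_div_iff₀ (mul_pos hK hIp)]; linarith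
      have hT1 : 1 ≤ T := by
        rw [hTdef]
        exact Real.one_le_rpow hQ1 (by positivity)
      have h1 := hmain T hT1
      have heq := aux_alg (1 - r) (p₀ - 2) K L Iv hrp hp2 hK hL hIp
      rw [show (1 - r) + (p₀ - 2) = β by rw [hβdef]; ring] at heq
      rw [show -(p₀ - 2) = 2 - p₀ by ring] at heq
      rw [← hTdef, ← hθdef, ← h1θ] at heq
      have h2 : lhs ≤ 2 * ((K * Iv) ^ θ * L ^ (1 - θ)) := le_of_le_of_eq h1 heq
      have e1 : (K * Iv) ^ θ = K ^ θ * Iv ^ θ := Real.mul_rpow hK.le hIp.le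
      have e2 : L ^ (1 - θ) = A ^ (1 - θ) * D₀ ^ (p₀ * (1 - θ)) := by
        rw [hLdef, Real.mul_rpow hA.le (by positivity), Real.rpow_mul hD₀.le]
      calc lhs ≤ 2 * ((K * Iv) ^ θ * L ^ (1 - θ)) := h2
        _ = (2 * (K ^ θ * A ^ (1 - θ))) * D₀ ^ (p₀ * (1 - θ)) * Iv ^ θ := by
            rw [e1, e2]; ring
        _ ≤ (2 * K * (M * A) ^ (1 - θ) + 2 * (K ^ θ * A ^ (1 - θ)) + 1)
              * D₀ ^ (p₀ * (1 - θ)) * Iv ^ θ := by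
            refine mul_le_mul_of_nonneg_right
              (mul_le_mul_of_nonneg_right ?_ hDσ.le) hIθ0
            nlinarith [mul_pos (mul_pos two_pos hK) hMAθ]
end

section
/- Let p : [0,∞) → [0,∞) be continuous, strictly increasing, with p(0) = 0, so that I + p (where I denotes the identity) is a strictly increasing bijection of [0,∞) onto itself; define q : [0,∞) → [0,∞) by q(x) = x − (I + p)^{−1}(x). Let (s_m)_{m ≥ 0} be a sequence of nonnegative real numbers satisfying s_{m+1} + p(s_{m+1}) ≤ s_m for all m ≥ 0, and let S : [0,∞) → [0,∞) be a differentiable function with S'(t) + q(S(t)) = 0 for all t ≥ 0 and S(0) = s₀. Then s_m ≤ S(m) for every m ∈ ℕ; moreover, if p(x) > 0 for every x > 0, then S(t) → 0 as t → ∞. -/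
open Set Filter

/-- (Lasiecka–Tataru Lemma A.)  Let `p : [0,∞) → [0,∞)` be
continuous, strictly increasing, with `p 0 = 0`, so `I + p` is a strictly increasing
bijection of `[0,∞)` onto itself; here `Finv` denotes `(I + p)⁻¹`, and
`q x = x − (I + p)⁻¹ x`.  If `(s_m)` is a sequence of nonnegative reals with
`s_{m+1} + p(s_{m+1}) ≤ s_m`, and `S : [0,∞) → [0,∞)` is differentiable with
`S' + q(S) = 0` and `S 0 = s₀`, then `s_m ≤ S m` for every `m`; moreover, if
`p x > 0` for every `x > 0`, then `S t → 0` as `t → ∞`. -/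
theorem stmt_18 (p : ℝ → ℝ)
    (hpc : ContinuousOn p (Ici 0)) (hpm : StrictMonoOn p (Ici 0))
    (hp0 : p 0 = 0) (hpnn : ∀ x ≥ (0:ℝ), 0 ≤ p x)
    (Finv : ℝ → ℝ)
    (hFinv : ∀ x ≥ (0:ℝ), 0 ≤ Finv x ∧ Finv x + p (Finv x) = x)
    (q : ℝ → ℝ) (hq : ∀ x ≥ (0:ℝ), q x = x - Finv x)
    (s : ℕ → ℝ) (hs : ∀ m, 0 ≤ s m)
    (hrec : ∀ m : ℕ, s (m + 1) + p (s (m + 1)) ≤ s m)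
    (S : ℝ → ℝ) (hS0 : S 0 = s 0) (hSnn : ∀ t ≥ (0:ℝ), 0 ≤ S t)
    (hS : ∀ t ≥ (0:ℝ), HasDerivWithinAt S (-(q (S t))) (Ici 0) t) :
    (∀ m : ℕ, s m ≤ S m) ∧
      ((∀ x > (0:ℝ), 0 < p x) → Tendsto S atTop (nhds 0)) := by
  have hFnn : ∀ x ≥ (0:ℝ), 0 ≤ Finv x := fun x hx => (hFinv x hx).1
  have hqnn : ∀ x ≥ (0:ℝ), 0 ≤ q x := by
    intro x hx
    rw [hq x hx]
    have h := (hFinv x hx).2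
    have := hpnn (Finv x) (hFnn x hx)
    linarith
  have hFmono : ∀ a b : ℝ, 0 ≤ a → a ≤ b → Finv a ≤ Finv b := by
    intro a b ha hab
    by_contra h
    push_neg at h
    have h1 := (hFinv a ha).2
    have h2 := (hFinv b (ha.trans hab)).2
    have hp' : p (Finv b) < p (Finv a) :=
      hpm (mem_Ici.mpr (hFnn b (ha.trans hab))) (mem_Ici.mpr (hFnn a ha)) h
    linarith
  have hqmono : ∀ a b : ℝ, 0 ≤ a → a ≤ b → q a ≤ q b := by
    intro a b ha hab
    have hb := ha.trans hab
    rw [hq a ha, hq b hb]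
    have h1 := (hFinv a ha).2
    have h2 := (hFinv b hb).2
    have hF := hFmono a b ha hab
    have hple : p (Finv a) ≤ p (Finv b) :=
      hpm.monotoneOn (mem_Ici.mpr (hFnn a ha)) (mem_Ici.mpr (hFnn b hb)) hF
    linarith
  have hScont : ContinuousOn S (Ici 0) := fun t ht => (hS t ht).continuousWithinAt
  have hSanti : AntitoneOn S (Ici 0) := by
    apply antitoneOn_of_deriv_nonpos (convex_Ici 0) hScont
    · intro x hx
      rw [interior_Ici] at hx
      exact ((hS x hx.le).hasDerivAt (Ici_mem_nhds hx)).differentiableAt.differentiableWithinAt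
    · intro x hx
      rw [interior_Ici] at hx
      rw [((hS x hx.le).hasDerivAt (Ici_mem_nhds hx)).deriv]
      have := hqnn (S x) (hSnn x hx.le)
      linarith
  have hstep : ∀ a b : ℝ, 0 ≤ a → a ≤ b → S a - q (S a) * (b - a) ≤ S b := by
    intro a b ha hab
    have key : MonotoneOn (fun t => S t + q (S a) * t) (Icc a b) := by
      apply monotoneOn_of_deriv_nonneg (convex_Icc a b)
      · exact ((hScont.mono (fun x hx => le_trans ha hx.1)).add
          (continuous_const.mul continuous_id).continuousOn)
      · intro x hx
        rw [interior_Icc] at hx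
        have hxpos : 0 < x := lt_of_le_of_lt ha hx.1
        have hd : HasDerivAt (fun t => S t + q (S a) * t) (-(q (S x)) + q (S a) * 1) x :=
          ((hS x hxpos.le).hasDerivAt (Ici_mem_nhds hxpos)).add
            ((hasDerivAt_id x).const_mul (q (S a)))
        exact hd.differentiableAt.differentiableWithinAt
      · intro x hx
        rw [interior_Icc] at hx
        have hxpos : 0 < x := lt_of_le_of_lt ha hx.1
        have hd : HasDerivAt (fun t => S t + q (S a) * t) (-(q (S x)) + q (S a) * 1) x :=
          ((hS x hxpos.le).hasDerivAt (Ici_mem_nhds hxpos)).add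
            ((hasDerivAt_id x).const_mul (q (S a)))
        rw [hd.deriv]
        have hSx : S x ≤ S a := hSanti (mem_Ici.mpr ha) (mem_Ici.mpr hxpos.le) hx.1.le
        have := hqmono (S x) (S a) (hSnn x hxpos.le) hSx
        linarith
    have h := key (left_mem_Icc.mpr hab) (right_mem_Icc.mpr hab) hab
    simp only [] at h
    nlinarith [h]
  have part1 : ∀ m : ℕ, s m ≤ S m := by
    intro m
    induction m with
    | zero => simp [← hS0]
    | succ n ih =>
      have h1 : s (n + 1) ≤ Finv (s n) := by
        by_contra h
        push_neg at h
        have hF := hFinv (s n) (hs n)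
        have hp' : p (Finv (s n)) < p (s (n + 1)) :=
          hpm (mem_Ici.mpr hF.1) (mem_Ici.mpr (hs (n + 1))) h
        linarith [hrec n, hF.2]
      have h2 : Finv (s n) ≤ Finv (S n) := hFmono _ _ (hs n) ih
      have h3 : Finv (S n) ≤ S ((n : ℝ) + 1) := by
        have hn : (0:ℝ) ≤ (n : ℝ) := Nat.cast_nonneg n
        have hst := hstep (n : ℝ) ((n : ℝ) + 1) hn (by linarith)
        have hqe : q (S n) = S n - Finv (S n) := hq _ (hSnn _ hn)
        have hb : ((n : ℝ) + 1 - n) = 1 := by ring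
        rw [hb] at hst
        linarith
      push_cast
      linarith
  refine ⟨part1, ?_⟩
  intro hppos
  set g : ℝ → ℝ := fun t => S (max t 0) with hg
  have hganti : Antitone g := by
    intro a b hab
    exact hSanti (mem_Ici.mpr (le_max_right a 0)) (mem_Ici.mpr (le_max_right b 0))
      (max_le_max hab le_rfl)
  have hbdd : BddBelow (range g) := by
    refine ⟨0, ?_⟩
    rintro y ⟨t, rfl⟩
    exact hSnn _ (le_max_right t 0)
  have htend := tendsto_atTop_ciInf hganti hbdd
  set L := ⨅ t, g t with hL
  have hL0 : (0:ℝ) ≤ L := le_ciInf (fun t => hSnn _ (le_max_right t 0))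
  have hLle : ∀ t ≥ (0:ℝ), L ≤ S t := by
    intro t ht
    have := ciInf_le hbdd t
    simpa [hg, max_eq_left ht] using this
  have hLz : L = 0 := by
    by_contra hne
    have hLpos : 0 < L := lt_of_le_of_ne hL0 (Ne.symm hne)
    have hFL := hFinv L hL0
    have hFLpos : 0 < Finv L := by
      rcases lt_or_eq_of_le hFL.1 with h | h
      · exact h
      · exfalso
        have h2 := hFL.2
        rw [← h, hp0] at h2
        linarith
    have hqL : 0 < q L := by
      rw [hq L hL0]
      have := hppos (Finv L) hFLpos
      linarith [hFL.2]
    set T : ℝ := S 0 / q L + 1 with hT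
    have hS00 : 0 ≤ S 0 := hSnn 0 le_rfl
    have hTpos : 0 < T := by
      rw [hT]
      have : 0 ≤ S 0 / q L := div_nonneg hS00 hqL.le
      linarith
    have hanti2 : AntitoneOn (fun t => S t + q L * t) (Ici 0) := by
      apply antitoneOn_of_deriv_nonpos (convex_Ici 0)
      · exact hScont.add (continuous_const.mul continuous_id).continuousOn
      · intro x hx
        rw [interior_Ici] at hx
        have hd : HasDerivAt (fun t => S t + q L * t) (-(q (S x)) + q L * 1) x :=
          ((hS x hx.le).hasDerivAt (Ici_mem_nhds hx)).add
            ((hasDerivAt_id x).const_mul (q L))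
        exact hd.differentiableAt.differentiableWithinAt
      · intro x hx
        rw [interior_Ici] at hx
        have hd : HasDerivAt (fun t => S t + q L * t) (-(q (S x)) + q L * 1) x :=
          ((hS x hx.le).hasDerivAt (Ici_mem_nhds hx)).add
            ((hasDerivAt_id x).const_mul (q L))
        rw [hd.deriv]
        have := hqmono L (S x) hL0 (hLle x hx.le)
        linarith
    have h := hanti2 (mem_Ici.mpr le_rfl) (mem_Ici.mpr hTpos.le) hTpos.le
    simp only [mul_zero, add_zero] at h
    have hqT : q L * T = S 0 + q L := by
      rw [hT, mul_add, mul_one, mul_div_cancel₀ _ (ne_of_gt hqL)]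
    have hSTnn := hSnn T hTpos.le
    linarith
  have heq : S =ᶠ[atTop] g := by
    filter_upwards [eventually_ge_atTop (0:ℝ)] with t ht
    simp [hg, max_eq_left ht]
  exact (tendsto_congr' heq).mpr (hLz ▸ htend)
end
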